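/- arXiv:1608.02743 — 6 statements merged into one kernel-verified Lean document; each statement's English description precedes it below -/
import Mathlib

section
/- For the step-down test with boundary tau_SD (or the step-up test with boundary tau_SU) based on the critical values beta_i = i*alpha/(n+1-i*(1-alpha)), 1 <= i <= n, the false discovery rate satisfies the exact identity FDR = (alpha/(n+1)) * E[V(tau)/beta_{R(tau)}] + ((1-alpha)/(n+1)) * E[V(tau)], where tau is the corresponding boundary variable, beta_{R(tau)} denotes the critical value beta indexed by the total number of rejections R(tau) (with beta_0 := beta_1), and the term V(tau)/beta_{R(tau)} is taken to be 0 when V(tau) = 0. -/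
open MeasureTheory Finset
open scoped Classical

noncomputable section

variable {Ω : Type*}

/-- Number of p-values with index in `I` that are `≤ t` (e.g. false rejections `V`). -/
def Vc {n : ℕ} (p : Fin n → Ω → ℝ) (I : Finset (Fin n)) (t : ℝ) (ω : Ω) : ℕ :=
  (I.filter fun i => p i ω ≤ t).card

/-- Total number of rejections `R(t)`. -/
def Rc {n : ℕ} (p : Fin n → Ω → ℝ) (t : ℝ) (ω : Ω) : ℕ :=
  (Finset.univ.filter fun i => p i ω ≤ t).card

/-- Critical values `β_i = iα/(n+1-i(1-α))` (note `β_0 = 0`). -/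
def beta (n : ℕ) (α : ℝ) (i : ℕ) : ℝ := i * α / (n + 1 - i * (1 - α))

/-- Step-down boundary: `max {crit i : p_{j:n} ≤ crit j for all j ≤ i}`, max ∅ := 0.
(`p_{j:n} ≤ c ↔ R(c) ≥ j`.) -/
def tauSD {n : ℕ} (p : Fin n → Ω → ℝ) (crit : ℕ → ℝ) (ω : Ω) : ℝ :=
  if h : ((Finset.Icc 1 n).filter fun i =>
      ∀ j ∈ Finset.Icc 1 i, j ≤ Rc p (crit j) ω).Nonempty then
    (((Finset.Icc 1 n).filter fun i =>
      ∀ j ∈ Finset.Icc 1 i, j ≤ Rc p (crit j) ω)).sup' h crit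
  else 0

/-- Step-up boundary: `max {crit i : p_{i:n} ≤ crit i}`, max ∅ := 0. -/
def tauSU {n : ℕ} (p : Fin n → Ω → ℝ) (crit : ℕ → ℝ) (ω : Ω) : ℝ :=
  if h : ((Finset.Icc 1 n).filter fun i => i ≤ Rc p (crit i) ω).Nonempty then
    ((Finset.Icc 1 n).filter fun i => i ≤ Rc p (crit i) ω).sup' h crit
  else 0

/-- FDR estimator `\hat α_n(t)`. -/
def alphaHat {n : ℕ} (p : Fin n → Ω → ℝ) (t : ℝ) (ω : Ω) : ℝ :=
  (t / (1 - t)) * ((1 - (Rc p t ω : ℝ) / n) / ((Rc p t ω : ℝ) / n + 1 / n))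

/-- `σ = min {crit i : p_{i:n} > crit i} ∧ crit n` (min ∅ := crit n). -/
def sigmaB {n : ℕ} (p : Fin n → Ω → ℝ) (crit : ℕ → ℝ) (ω : Ω) : ℝ :=
  min (if h : ((Finset.Icc 1 n).filter fun i => Rc p (crit i) ω < i).Nonempty then
        ((Finset.Icc 1 n).filter fun i => Rc p (crit i) ω < i).inf' h crit
      else crit n) (crit n)

/-- The filtration `F_t^T`, `T = {0, β_1, ..., β_n}` indexed by `k ∈ {0,...,n}`. -/
def Ffilt {n : ℕ} (p : Fin n → Ω → ℝ) (B : ℕ → ℝ) (k : ℕ) : MeasurableSpace Ω :=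
  MeasurableSpace.generateFrom {A | ∃ i : Fin n, ∃ j ≤ k, A = {ω | p i ω ≤ B j}}

/-- The martingale-type process `M_J(t) = ∑_{i∈J} (1(p_i ≤ t) - t)/(1-t)` at `t`. -/
def Mval {n : ℕ} (p : Fin n → Ω → ℝ) (J : Finset (Fin n)) (t : ℝ) (ω : Ω) : ℝ :=
  ∑ i ∈ J, ((if p i ω ≤ t then (1 : ℝ) else 0) - t) / (1 - t)


lemma measurable_Rc {n : ℕ} [MeasurableSpace Ω] (p : Fin n → Ω → ℝ)
    (hpm : ∀ i, Measurable (p i)) (t : ℝ) : Measurable (fun ω => Rc p t ω) := by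
  unfold Rc
  simp_rw [Finset.card_filter]
  exact Finset.measurable_sum _ fun i _ =>
    Measurable.ite (measurableSet_le (hpm i) measurable_const) measurable_const measurable_const

lemma measurable_dite_sup {n : ℕ} [MeasurableSpace Ω] (P : ℕ → Ω → Prop)
    (inst : ∀ i ω, Decidable (P i ω))
    (hP : ∀ i, MeasurableSet {ω | P i ω}) (crit : ℕ → ℝ) :
    Measurable (fun ω => if h : (@Finset.filter ℕ (fun i => P i ω) (fun i => inst i ω)
        (Finset.Icc 1 n)).Nonempty then
      (@Finset.filter ℕ (fun i => P i ω) (fun i => inst i ω) (Finset.Icc 1 n)).sup' h crit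
    else 0) := by
  have key : ∀ ω : Ω, (if h : (@Finset.filter ℕ (fun i => P i ω) (fun i => inst i ω)
        (Finset.Icc 1 n)).Nonempty then
      (@Finset.filter ℕ (fun i => P i ω) (fun i => inst i ω) (Finset.Icc 1 n)).sup' h crit
    else 0)
      = ∑ s ∈ (Finset.Icc 1 n).powerset,
          if (∀ i ∈ Finset.Icc 1 n, (i ∈ s ↔ P i ω)) then
            (if h : s.Nonempty then s.sup' h crit else 0) else 0 := by
    intro ω
    rw [Finset.sum_eq_single_of_mem (@Finset.filter ℕ (fun i => P i ω) (fun i => inst i ω)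
        (Finset.Icc 1 n))
      (Finset.mem_powerset.2 (Finset.filter_subset _ _))]
    · rw [if_pos]
      intro i hi
      simp [hi]
    · intro s hs hne
      rw [if_neg]
      intro hcond
      apply hne
      apply Finset.Subset.antisymm
      · intro i hi
        have hiI : i ∈ Finset.Icc 1 n := Finset.mem_powerset.1 hs hi
        simp only [Finset.mem_filter]
        exact ⟨hiI, (hcond i hiI).1 hi⟩
      · intro i hi
        have hiI : i ∈ Finset.Icc 1 n := (Finset.mem_filter.1 hi).1
        exact (hcond i hiI).2 (Finset.mem_filter.1 hi).2
  simp_rw [key]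
  apply Finset.measurable_sum
  intro s _
  refine Measurable.ite ?_ measurable_const measurable_const
  have hs : {ω : Ω | ∀ i ∈ Finset.Icc 1 n, (i ∈ s ↔ P i ω)}
      = ⋂ i ∈ Finset.Icc 1 n, {ω | i ∈ s ↔ P i ω} := by
    ext ω; simp
  rw [hs]
  refine MeasurableSet.biInter (Finset.Icc 1 n : Finset ℕ).countable_toSet fun i _ => ?_
  by_cases h : i ∈ s
  · have : {ω : Ω | i ∈ s ↔ P i ω} = {ω | P i ω} := by ext ω; simp [h]
    rw [this]; exact hP i
  · have : {ω : Ω | i ∈ s ↔ P i ω} = {ω | P i ω}ᶜ := by ext ω; simp [h]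
    rw [this]; exact (hP i).compl

set_option maxHeartbeats 1000000 in
/-- exact FDR identity for the SD/SU tests based on `β_i`. -/
theorem fdr_identity_beta {n : ℕ} [MeasurableSpace Ω] (μ : Measure Ω)
    [IsProbabilityMeasure μ] (p : Fin n → Ω → ℝ) (I0 : Finset (Fin n)) (α : ℝ)
    (hn : 1 ≤ n) (hα : α ∈ Set.Ioo (0 : ℝ) 1) (hI0 : I0.Nonempty)
    (hp01 : ∀ i ω, p i ω ∈ Set.Icc (0 : ℝ) 1) (hpm : ∀ i, Measurable (p i))
    (τ : Ω → ℝ) (hτ : τ = tauSD p (beta n α) ∨ τ = tauSU p (beta n α)) :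
    ∫ ω, (Vc p I0 (τ ω) ω : ℝ) / (Rc p (τ ω) ω : ℝ) ∂μ
      = α / (n + 1) * ∫ ω, (Vc p I0 (τ ω) ω : ℝ) / beta n α (max (Rc p (τ ω) ω) 1) ∂μ
        + (1 - α) / (n + 1) * ∫ ω, (Vc p I0 (τ ω) ω : ℝ) ∂μ := by
  have hα0 : (0:ℝ) < α := hα.1
  have hα1 : α < 1 := hα.2
  -- measurability of τ
  have hRcm : ∀ t : ℝ, Measurable (fun ω => Rc p t ω) := fun t => measurable_Rc p hpm t
  have hτm : Measurable τ := by
    rcases hτ with h | h <;> subst h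
    · unfold tauSD
      refine measurable_dite_sup _ _ (fun i => ?_) _
      have : {ω : Ω | ∀ j ∈ Finset.Icc 1 i, j ≤ Rc p (beta n α j) ω}
          = ⋂ j ∈ Finset.Icc 1 i, {ω | j ≤ Rc p (beta n α j) ω} := by ext ω; simp
      rw [this]
      exact MeasurableSet.biInter (Finset.Icc 1 i : Finset ℕ).countable_toSet
        fun j _ => hRcm (beta n α j) measurableSet_Ici
    · unfold tauSU
      exact measurable_dite_sup (n := n) (fun i ω => i ≤ Rc p (beta n α i) ω) _
        (fun i => hRcm (beta n α i) measurableSet_Ici) (beta n α)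
  set V : Ω → ℕ := fun ω => Vc p I0 (τ ω) ω with hVdef
  set R : Ω → ℕ := fun ω => Rc p (τ ω) ω with hRdef
  have hVm : Measurable V := by
    simp only [hVdef, Vc, Finset.card_filter]
    exact Finset.measurable_sum _ fun i _ =>
      Measurable.ite (measurableSet_le (hpm i) hτm) measurable_const measurable_const
  have hRm : Measurable R := by
    simp only [hRdef, Rc, Finset.card_filter]
    exact Finset.measurable_sum _ fun i _ =>
      Measurable.ite (measurableSet_le (hpm i) hτm) measurable_const measurable_const
  have hVR : ∀ ω, V ω ≤ R ω := fun ω =>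
    Finset.card_le_card (Finset.monotone_filter_left _ (Finset.subset_univ I0))
  have hRn : ∀ ω, R ω ≤ n := fun ω =>
    le_trans (Finset.card_filter_le _ _) (by simp)
  have hd : ∀ k : ℕ, k ≤ n → (0:ℝ) < n + 1 - k * (1 - α) := by
    intro k hk
    have hk' : (k:ℝ) ≤ n := Nat.cast_le.2 hk
    nlinarith
  have hbpos : ∀ k : ℕ, 1 ≤ k → k ≤ n → 0 < beta n α k := by
    intro k h1 h2
    have hk : (1:ℝ) ≤ k := by exact_mod_cast h1
    exact div_pos (by nlinarith) (hd k h2)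
  have hbmono : ∀ k : ℕ, 1 ≤ k → k ≤ n → beta n α 1 ≤ beta n α k := by
    intro k h1 h2
    unfold beta
    rw [div_le_div_iff₀ (hd 1 hn) (hd k h2)]
    have hk : (1:ℝ) ≤ k := by exact_mod_cast h1
    push_cast
    nlinarith [mul_nonneg (mul_nonneg hα0.le (sub_nonneg.2 hk)) (by positivity : (0:ℝ) ≤ (n:ℝ) + 1)]
  have key : ∀ ω, (V ω : ℝ) / (R ω : ℝ)
      = α / (n + 1) * ((V ω : ℝ) / beta n α (max (R ω) 1))
        + (1 - α) / (n + 1) * (V ω : ℝ) := by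
    intro ω
    rcases Nat.eq_zero_or_pos (R ω) with h0 | hpos
    · have hV0 : V ω = 0 := Nat.le_zero.1 (h0 ▸ hVR ω)
      simp [hV0]
    · have hmax : max (R ω) 1 = R ω := max_eq_left hpos
      rw [hmax]
      have h1 : (1:ℝ) ≤ (R ω : ℝ) := by exact_mod_cast hpos
      have h2 : ((R ω : ℕ) : ℝ) ≤ n := by exact_mod_cast hRn ω
      have hdpos := hd (R ω) (hRn ω)
      have hd' : (n:ℝ) + 1 - (R ω : ℝ) * (1 - α) ≠ 0 := ne_of_gt hdpos
      have hR0 : ((R ω : ℕ) : ℝ) ≠ 0 := by linarith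
      have hα0' : α ≠ 0 := ne_of_gt hα0
      have hn1 : (n:ℝ) + 1 ≠ 0 := by positivity
      unfold beta
      field_simp
      ring
  have hb1pos : 0 < beta n α 1 := hbpos 1 le_rfl hn
  have hgm : Measurable (fun ω => (V ω : ℝ) / beta n α (max (R ω) 1)) := by
    apply Measurable.div
    · exact (measurable_from_nat (f := fun k : ℕ => (k : ℝ))).comp hVm
    · exact (measurable_from_nat (f := fun k : ℕ => beta n α (max k 1))).comp hRm
  have hhm : Measurable (fun ω => (V ω : ℝ)) :=
    (measurable_from_nat (f := fun k : ℕ => (k : ℝ))).comp hVm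
  have hg : Integrable (fun ω => (V ω : ℝ) / beta n α (max (R ω) 1)) μ := by
    refine Integrable.mono' (integrable_const ((n:ℝ) / beta n α 1))
      hgm.aestronglyMeasurable (ae_of_all _ fun ω => ?_)
    have hVn : (V ω : ℝ) ≤ n := by exact_mod_cast le_trans (hVR ω) (hRn ω)
    have h1 : 1 ≤ max (R ω) 1 := le_max_right _ _
    have h2 : max (R ω) 1 ≤ n := max_le (hRn ω) hn
    have hβ := hbmono _ h1 h2
    have hβpos : 0 < beta n α (max (R ω) 1) := hbpos _ h1 h2
    rw [Real.norm_eq_abs, abs_of_nonneg (by positivity)]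
    exact div_le_div₀ (by positivity) hVn hb1pos hβ
  have hh : Integrable (fun ω => (V ω : ℝ)) μ := by
    refine Integrable.mono' (integrable_const ((n:ℝ)))
      hhm.aestronglyMeasurable (ae_of_all _ fun ω => ?_)
    have hVn : (V ω : ℝ) ≤ n := by exact_mod_cast le_trans (hVR ω) (hRn ω)
    rw [Real.norm_eq_abs, abs_of_nonneg (by positivity)]
    exact hVn
  calc ∫ ω, (V ω : ℝ) / (R ω : ℝ) ∂μ
      = ∫ ω, (α / (n + 1) * ((V ω : ℝ) / beta n α (max (R ω) 1))
          + (1 - α) / (n + 1) * (V ω : ℝ)) ∂μ := integral_congr_ae (ae_of_all _ key)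
    _ = α / (n + 1) * ∫ ω, (V ω : ℝ) / beta n α (max (R ω) 1) ∂μ
          + (1 - α) / (n + 1) * ∫ ω, (V ω : ℝ) ∂μ := by
        rw [integral_add (hg.const_mul _) (hh.const_mul _), integral_const_mul, integral_const_mul]


end
end

section
/- Consider a step-down or step-up test whose nondecreasing critical values alpha_1 <= ... <= alpha_n satisfy 0 < alpha_i <= beta_i = i*alpha/(n+1-i*(1-alpha)) for all 1 <= i <= n, with boundary variable tau. If E[V(tau)/beta_{R(tau)}] <= n_0 and E[V(tau)] <= (alpha/(1-alpha))*(n_1+1), then the false discovery rate is controlled at level alpha, i.e. FDR <= alpha. (Here beta_{R(tau)} denotes beta indexed by the total number of rejections R(tau), with beta_0 := beta_1, and V(tau)/beta_{R(tau)} := 0 when V(tau) = 0.) -/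
open MeasureTheory Finset
open scoped Classical

noncomputable section

variable {Ω : Type*}

lemma measurable_Rc_aux {n : ℕ} [MeasurableSpace Ω] (p : Fin n → Ω → ℝ)
    (hpm : ∀ i, Measurable (p i)) (t : ℝ) : Measurable (Rc p t) := by
  have h : Rc p t = fun ω => ∑ i : Fin n, if p i ω ≤ t then 1 else 0 := by
    funext ω; rw [Rc, Finset.card_filter]
  rw [h]
  exact Finset.measurable_sum _ fun i _ =>
    Measurable.ite (measurableSet_le (hpm i) measurable_const) measurable_const measurable_const

lemma measurable_dsup_aux {n : ℕ} [MeasurableSpace Ω] (hn : 1 ≤ n) (crit : ℕ → ℝ)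
    (hcrit_pos : ∀ i, 1 ≤ i → i ≤ n → 0 < crit i)
    (c : ℕ → Ω → Prop) (hc : ∀ i, MeasurableSet {ω | c i ω}) :
    Measurable (fun ω => if h : ((Finset.Icc 1 n).filter fun i => c i ω).Nonempty then
      ((Finset.Icc 1 n).filter fun i => c i ω).sup' h crit else 0) := by
  have h1n : (1:ℕ) ∈ Finset.Icc 1 n := by simp [hn]
  have hne : (Finset.Icc 1 n).Nonempty := ⟨1, h1n⟩
  have heq : (fun ω => if h : ((Finset.Icc 1 n).filter fun i => c i ω).Nonempty then
      ((Finset.Icc 1 n).filter fun i => c i ω).sup' h crit else 0)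
      = fun ω => (Finset.Icc 1 n).sup' hne (fun i => if c i ω then crit i else 0) := by
    funext ω
    by_cases h : ((Finset.Icc 1 n).filter fun i => c i ω).Nonempty
    · rw [dif_pos h]
      apply le_antisymm
      · apply Finset.sup'_le
        intro i hi
        have hi' := Finset.mem_filter.mp hi
        calc crit i = if c i ω then crit i else 0 := by rw [if_pos hi'.2]
          _ ≤ _ := Finset.le_sup' (f := fun j => if c j ω then crit j else 0) hi'.1
      · apply Finset.sup'_le
        intro i hi
        by_cases hci : c i ω
        · rw [if_pos hci]
          have hmem : i ∈ (Finset.Icc 1 n).filter fun j => c j ω :=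
            Finset.mem_filter.mpr ⟨hi, hci⟩
          exact Finset.le_sup' crit hmem
        · rw [if_neg hci]
          obtain ⟨i0, hi0⟩ := h
          have hi0' := Finset.mem_filter.mp hi0
          have h0 : (0:ℝ) ≤ crit i0 :=
            (hcrit_pos i0 (Finset.mem_Icc.mp hi0'.1).1 (Finset.mem_Icc.mp hi0'.1).2).le
          exact h0.trans (Finset.le_sup' _ hi0)
    · rw [dif_neg h]
      symm
      apply le_antisymm
      · apply Finset.sup'_le
        intro i hi
        rw [if_neg (fun hci => h ⟨i, Finset.mem_filter.mpr ⟨hi, hci⟩⟩)]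
      · have hle := Finset.le_sup' (f := fun i => if c i ω then crit i else 0) h1n
        rwa [if_neg (fun hci => h ⟨1, Finset.mem_filter.mpr ⟨h1n, hci⟩⟩)] at hle
  rw [heq]
  have hrw : (fun ω => (Finset.Icc 1 n).sup' hne (fun i => if c i ω then crit i else 0))
      = (Finset.Icc 1 n).sup' hne (fun i ω => if c i ω then crit i else 0) := by
    funext ω; rw [Finset.sup'_apply]
  rw [hrw]
  exact Finset.measurable_sup' hne fun i _ =>
    Measurable.ite (hc i) measurable_const measurable_const


/-- sufficient conditions for FDR control at level `α`. -/
theorem fdr_control_of_two_bounds {n : ℕ} [MeasurableSpace Ω] (μ : Measure Ω)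
    [IsProbabilityMeasure μ] (p : Fin n → Ω → ℝ) (I0 : Finset (Fin n)) (α : ℝ)
    (hn : 1 ≤ n) (hα : α ∈ Set.Ioo (0 : ℝ) 1) (hI0 : I0.Nonempty)
    (hp01 : ∀ i ω, p i ω ∈ Set.Icc (0 : ℝ) 1) (hpm : ∀ i, Measurable (p i))
    (crit : ℕ → ℝ)
    (hcrit_mono : ∀ i j, 1 ≤ i → i ≤ j → j ≤ n → crit i ≤ crit j)
    (hcrit_pos : ∀ i, 1 ≤ i → i ≤ n → 0 < crit i)
    (hcrit_le : ∀ i, 1 ≤ i → i ≤ n → crit i ≤ beta n α i)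
    (τ : Ω → ℝ) (hτ : τ = tauSD p crit ∨ τ = tauSU p crit)
    (h1 : ∫ ω, (Vc p I0 (τ ω) ω : ℝ) / beta n α (max (Rc p (τ ω) ω) 1) ∂μ ≤ I0.card)
    (h2 : ∫ ω, (Vc p I0 (τ ω) ω : ℝ) ∂μ ≤ α / (1 - α) * ((n - I0.card : ℕ) + 1)) :
    ∫ ω, (Vc p I0 (τ ω) ω : ℝ) / (Rc p (τ ω) ω : ℝ) ∂μ ≤ α := by
  obtain ⟨hα0, hα1⟩ := hα
  -- measurability of τ
  have hRcm : ∀ t : ℝ, Measurable (Rc p t) := measurable_Rc_aux p hpm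
  have hRci : ∀ (j i : ℕ), MeasurableSet {ω : Ω | j ≤ Rc p (crit i) ω} := fun j i =>
    hRcm (crit i) measurableSet_Ici
  have hτm : Measurable τ := by
    rcases hτ with h | h <;> subst h
    · exact measurable_dsup_aux hn crit hcrit_pos _ (fun i => by
        have : {ω : Ω | ∀ j ∈ Finset.Icc 1 i, j ≤ Rc p (crit j) ω}
            = ⋂ j ∈ Finset.Icc 1 i, {ω : Ω | j ≤ Rc p (crit j) ω} := by
          ext ω; simp
        rw [this]
        exact MeasurableSet.biInter (Finset.Icc 1 i).countable_toSet fun j _ => hRci j j)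
    · have hm := measurable_dsup_aux hn crit hcrit_pos
        (fun i ω => i ≤ Rc p (crit i) ω) (fun i => hRci i i)
      convert hm using 1
      funext ω
      rw [tauSU]
      congr!
  -- measurability of V and R along τ
  have hVm : Measurable fun ω => Vc p I0 (τ ω) ω := by
    have h : (fun ω => Vc p I0 (τ ω) ω)
        = fun ω => ∑ i ∈ I0, if p i ω ≤ τ ω then 1 else 0 := by
      funext ω; rw [Vc, Finset.card_filter]
    rw [h]
    exact Finset.measurable_sum _ fun i _ =>
      Measurable.ite (measurableSet_le (hpm i) hτm) measurable_const measurable_const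
  have hRm : Measurable fun ω => Rc p (τ ω) ω := by
    have h : (fun ω => Rc p (τ ω) ω)
        = fun ω => ∑ i : Fin n, if p i ω ≤ τ ω then 1 else 0 := by
      funext ω; rw [Rc, Finset.card_filter]
    rw [h]
    exact Finset.measurable_sum _ fun i _ =>
      Measurable.ite (measurableSet_le (hpm i) hτm) measurable_const measurable_const
  set V : Ω → ℕ := fun ω => Vc p I0 (τ ω) ω with hV
  set R : Ω → ℕ := fun ω => Rc p (τ ω) ω with hR
  -- basic counting facts
  have hVR : ∀ ω, V ω ≤ R ω := fun ω => Finset.card_le_card (by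
    intro x hx
    rw [Finset.mem_filter] at hx ⊢
    exact ⟨Finset.mem_univ x, hx.2⟩)
  have hRn : ∀ ω, R ω ≤ n := fun ω =>
    (Finset.card_filter_le _ _).trans (by simp)
  have hVn : ∀ ω, V ω ≤ n := fun ω => (hVR ω).trans (hRn ω)
  -- beta bounds
  have hβlb : ∀ r : ℕ, 1 ≤ r → r ≤ n → α / (n + 1) ≤ beta n α r := by
    intro r hr1 hrn
    have hD1 : ((r:ℝ)) * (1 - α) ≤ n := by
      calc (r:ℝ) * (1-α) ≤ n * 1 := by
            apply mul_le_mul (by exact_mod_cast hrn) (by linarith) (by linarith)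
              (Nat.cast_nonneg n)
        _ = n := mul_one _
    have hD : (0:ℝ) < (n:ℝ) + 1 - r * (1 - α) := by linarith
    have hDle : (n:ℝ) + 1 - r * (1 - α) ≤ (n:ℝ) + 1 := by
      have : (0:ℝ) ≤ (r:ℝ) * (1-α) := mul_nonneg (Nat.cast_nonneg r) (by linarith)
      linarith
    have hr1' : (1:ℝ) ≤ (r:ℝ) := by exact_mod_cast hr1
    have hra : α ≤ (r:ℝ) * α := le_mul_of_one_le_left hα0.le hr1'
    have h1 : α / ((n:ℝ)+1) ≤ (r:ℝ) * α / ((n:ℝ)+1) :=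
      div_le_div_of_nonneg_right hra (by positivity)
    have h2 : (r:ℝ) * α / ((n:ℝ)+1) ≤ (r:ℝ) * α / ((n:ℝ)+1 - r*(1-α)) := by
      apply div_le_div_of_nonneg_left (by positivity) hD hDle
    calc α / ((n:ℝ)+1) ≤ (r:ℝ)*α/((n:ℝ)+1) := h1
      _ ≤ _ := h2
      _ = beta n α r := rfl
  have hβpos : ∀ r : ℕ, 1 ≤ r → r ≤ n → 0 < beta n α r := fun r h1 h2 =>
    lt_of_lt_of_le (by positivity) (hβlb r h1 h2)
  -- functions f and g
  set f : Ω → ℝ := fun ω => (V ω : ℝ) / beta n α (max (R ω) 1) with hf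
  set g : Ω → ℝ := fun ω => (V ω : ℝ) with hg
  have hmax1 : ∀ ω, 1 ≤ max (R ω) 1 := fun ω => le_max_right _ _
  have hmaxn : ∀ ω, max (R ω) 1 ≤ n := fun ω => max_le (hRn ω) hn
  have hfm : Measurable f := by
    apply Measurable.div
    · exact (measurable_of_countable fun v : ℕ => (v:ℝ)).comp hVm
    · exact (measurable_of_countable fun r : ℕ => beta n α (max r 1)).comp hRm
  have hgm : Measurable g := (measurable_of_countable fun v : ℕ => (v:ℝ)).comp hVm
  have hfnn : ∀ ω, 0 ≤ f ω := fun ω =>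
    div_nonneg (Nat.cast_nonneg _) (hβpos _ (hmax1 ω) (hmaxn ω)).le
  have hfbd : ∀ ω, ‖f ω‖ ≤ (n:ℝ) * ((n:ℝ)+1) / α := by
    intro ω
    rw [Real.norm_eq_abs, abs_of_nonneg (hfnn ω)]
    have h1 : f ω ≤ (n:ℝ) / (α / ((n:ℝ)+1)) := by
      apply div_le_div₀ (Nat.cast_nonneg n) (by exact_mod_cast hVn ω)
        (by positivity) (hβlb _ (hmax1 ω) (hmaxn ω))
    calc f ω ≤ (n:ℝ) / (α / ((n:ℝ)+1)) := h1
      _ = (n:ℝ) * ((n:ℝ)+1) / α := by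
        rw [div_div_eq_mul_div]
  have hgbd : ∀ ω, ‖g ω‖ ≤ (n:ℝ) := by
    intro ω
    simp only [hg]
    rw [Real.norm_eq_abs, abs_of_nonneg (Nat.cast_nonneg _)]
    exact_mod_cast hVn ω
  have hfint : Integrable f μ :=
    Integrable.mono' (integrable_const _) hfm.aestronglyMeasurable (ae_of_all _ hfbd)
  have hgint : Integrable g μ :=
    Integrable.mono' (integrable_const _) hgm.aestronglyMeasurable (ae_of_all _ hgbd)
  -- pointwise identity
  have hkey : ∀ ω, (V ω : ℝ) / (R ω : ℝ)
      = α / ((n:ℝ)+1) * f ω + (1-α) / ((n:ℝ)+1) * g ω := by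
    intro ω
    by_cases hV0 : V ω = 0
    · simp [hf, hg, hV0]
    · have hR1 : 1 ≤ R ω := le_trans (Nat.one_le_iff_ne_zero.mpr hV0) (hVR ω)
      have hmax : max (R ω) 1 = R ω := max_eq_left hR1
      have hr1 : (1:ℝ) ≤ (R ω : ℝ) := by exact_mod_cast hR1
      have hrn : (R ω : ℝ) ≤ n := by exact_mod_cast hRn ω
      have hD : (0:ℝ) < (n:ℝ) + 1 - (R ω : ℝ) * (1 - α) := by nlinarith
      have hβ : beta n α (R ω) = (R ω : ℝ) * α / ((n:ℝ) + 1 - (R ω : ℝ) * (1 - α)) := rfl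
      simp only [hf, hg, hmax, hβ]
      have hr0 : (R ω : ℝ) ≠ 0 := by linarith
      have hD0 : (n:ℝ) + 1 - (R ω : ℝ) * (1 - α) ≠ 0 := ne_of_gt hD
      have hn1 : (n:ℝ) + 1 ≠ 0 := by positivity
      field_simp
      ring
  have hcongr : (fun ω => (Vc p I0 (τ ω) ω : ℝ) / (Rc p (τ ω) ω : ℝ))
      = fun ω => α / ((n:ℝ)+1) * f ω + (1-α) / ((n:ℝ)+1) * g ω := funext hkey
  rw [hcongr, integral_add (hfint.const_mul _) (hgint.const_mul _),
    integral_const_mul, integral_const_mul]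
  have han : (0:ℝ) < (n:ℝ) + 1 := by positivity
  have hle1 : α / ((n:ℝ)+1) * ∫ ω, f ω ∂μ ≤ α / ((n:ℝ)+1) * I0.card :=
    mul_le_mul_of_nonneg_left h1 (by positivity)
  have hle2 : (1-α) / ((n:ℝ)+1) * ∫ ω, g ω ∂μ
      ≤ (1-α) / ((n:ℝ)+1) * (α / (1 - α) * ((n - I0.card : ℕ) + 1)) :=
    mul_le_mul_of_nonneg_left h2 (div_nonneg (by linarith) (by positivity))
  have hcard : I0.card ≤ n := by
    simpa using Finset.card_le_univ I0
  have hcast : ((n - I0.card : ℕ) : ℝ) = (n:ℝ) - I0.card := Nat.cast_sub hcard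
  have hfin : α / ((n:ℝ)+1) * I0.card
      + (1-α) / ((n:ℝ)+1) * (α / (1 - α) * ((n - I0.card : ℕ) + 1)) = α := by
    rw [hcast]
    have h1α : (1:ℝ) - α ≠ 0 := by linarith
    field_simp
    ring
  linarith [add_le_add hle1 hle2]

end
end

section
/- For the critical values beta_i = i*alpha/(n+1-i*(1-alpha)), 1 <= i <= n, the random variable sigma = min{beta_i : p_{i:n} > beta_i} ∧ beta_n satisfies sigma = min{beta_i : hat_alpha_n(beta_i) >= alpha, i <= n} ∧ beta_n. -/
open MeasureTheory Finset
open scoped Classical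

noncomputable section

variable {Ω : Type*}

/-- `σ = min{β_i : p_{i:n} > β_i} ∧ β_n = min{β_i : \hatα_n(β_i) ≥ α} ∧ β_n`. -/
theorem sigma_eq_min_alphaHat {n : ℕ} (p : Fin n → Ω → ℝ) (α : ℝ)
    (hn : 1 ≤ n) (hα : α ∈ Set.Ioo (0 : ℝ) 1)
    (hp01 : ∀ i ω, p i ω ∈ Set.Icc (0 : ℝ) 1) :
    ∀ ω : Ω,
      sigmaB p (beta n α) ω
        = min
            (if h : ((Finset.Icc 1 n).filter fun i =>
                α ≤ alphaHat p (beta n α i) ω).Nonempty then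
              ((Finset.Icc 1 n).filter fun i =>
                α ≤ alphaHat p (beta n α i) ω).inf' h (beta n α)
            else beta n α n)
            (beta n α n) := by
  intro ω
  obtain ⟨hα0, hα1⟩ := hα
  have hn' : (1 : ℝ) ≤ n := by exact_mod_cast hn
  have hfilt : ((Finset.Icc 1 n).filter fun i => Rc p (beta n α i) ω < i)
      = ((Finset.Icc 1 n).filter fun i => α ≤ alphaHat p (beta n α i) ω) := by
    apply Finset.filter_congr
    intro i hi
    simp only [Finset.mem_Icc] at hi
    obtain ⟨hi1, hi2⟩ := hi
    have hi1' : (1 : ℝ) ≤ i := by exact_mod_cast hi1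
    have hi2' : (i : ℝ) ≤ n := by exact_mod_cast hi2
    set R : ℕ := Rc p (beta n α i) ω with hRdef
    have hRn : R ≤ n := by
      have := Finset.card_filter_le (Finset.univ : Finset (Fin n))
        (fun j => p j ω ≤ beta n α i)
      simpa [Rc, hRdef] using this
    have hR' : (R : ℝ) ≤ n := by exact_mod_cast hRn
    have hR0 : (0 : ℝ) ≤ R := Nat.cast_nonneg R
    have hD : (0 : ℝ) < n + 1 - i * (1 - α) := by nlinarith
    have hni : (0 : ℝ) < n + 1 - i := by linarith
    have hn0 : (0 : ℝ) < n := by linarith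
    have h1β : 1 - beta n α i = ((n : ℝ) + 1 - i) / (n + 1 - i * (1 - α)) := by
      rw [beta]
      field_simp
      ring
    have hAH : alphaHat p (beta n α i) ω
        = (i * α * ((n : ℝ) - R)) / (((n : ℝ) + 1 - i) * (R + 1)) := by
      rw [alphaHat, ← hRdef, h1β, beta]
      have h1 : ((n : ℝ) + 1 - i * (1 - α)) ≠ 0 := hD.ne'
      have h2 : ((n : ℝ) + 1 - i) ≠ 0 := hni.ne'
      have h3 : (n : ℝ) ≠ 0 := hn0.ne'
      have h4 : (R : ℝ) / n + 1 / n ≠ 0 := by positivity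
      have h5 : (R : ℝ) + 1 ≠ 0 := by positivity
      field_simp
      try ring
    rw [hAH]
    have hden : (0 : ℝ) < ((n : ℝ) + 1 - i) * (R + 1) := by positivity
    rw [le_div_iff₀ hden]
    constructor
    · intro h
      have h' : (R : ℝ) + 1 ≤ i := by exact_mod_cast h
      nlinarith [mul_nonneg (mul_nonneg hα0.le (show (0:ℝ) ≤ (n:ℝ)+1 by linarith))
        (show (0:ℝ) ≤ (i:ℝ) - R - 1 by linarith)]
    · intro h
      have h' : (R : ℝ) + 1 ≤ i := by
        nlinarith [mul_pos hα0 (show (0:ℝ) < (n:ℝ)+1 by linarith)]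
      exact_mod_cast h'
  rw [sigmaB, hfilt]

end
end

section
/- For the critical values beta_i = i*alpha/(n+1-i*(1-alpha)), 1 <= i <= n, with step-down boundary tau_SD and sigma = min{beta_i : p_{i:n} > beta_i} ∧ beta_n, the following hold: (i) tau_SD <= sigma; (ii) hat_alpha_n(sigma) = alpha * 1(R(sigma) < n); (iii) sigma is a stopping time with respect to the filtration (F_t^T)_{t in T} of the p-values with time domain T = {0, beta_1, ..., beta_n}. -/
open MeasureTheory Finset
open scoped Classical

noncomputable section

variable {Ω : Type*}

lemma Rc_mono {n : ℕ} (p : Fin n → Ω → ℝ) {s t : ℝ} (h : s ≤ t) (ω : Ω) :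
    Rc p s ω ≤ Rc p t ω := by
  apply Finset.card_le_card
  exact Finset.monotone_filter_right _ (fun i _ hi => le_trans hi h)

lemma Rc_le_n {n : ℕ} (p : Fin n → Ω → ℝ) (t : ℝ) (ω : Ω) : Rc p t ω ≤ n := by
  simpa [Rc] using Finset.card_filter_le (Finset.univ : Finset (Fin n)) _

lemma beta_denom_pos {n : ℕ} {α : ℝ} (hα0 : 0 < α) {i : ℕ} (hi : i ≤ n) :
    0 < (n : ℝ) + 1 - i * (1 - α) := by
  have hin : (i : ℝ) ≤ n := Nat.cast_le.mpr hi
  nlinarith [Nat.cast_nonneg (α := ℝ) i]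

lemma beta_nonneg {n : ℕ} {α : ℝ} (hα0 : 0 < α) {i : ℕ} (hi : i ≤ n) :
    0 ≤ beta n α i :=
  div_nonneg (mul_nonneg (Nat.cast_nonneg i) hα0.le) (beta_denom_pos hα0 hi).le

lemma beta_mono {n : ℕ} {α : ℝ} (hα0 : 0 < α) {i j : ℕ} (hij : i ≤ j) (hj : j ≤ n) :
    beta n α i ≤ beta n α j := by
  rw [beta, beta, div_le_div_iff₀ (beta_denom_pos hα0 (hij.trans hj)) (beta_denom_pos hα0 hj)]
  have hij' : (i : ℝ) ≤ j := Nat.cast_le.mpr hij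
  nlinarith [mul_nonneg (mul_nonneg (sub_nonneg.mpr hij') hα0.le)
    (show (0:ℝ) ≤ (n:ℝ) + 1 by positivity)]

lemma beta_strictMono {n : ℕ} {α : ℝ} (hα0 : 0 < α) {i j : ℕ} (hij : i < j) (hj : j ≤ n) :
    beta n α i < beta n α j := by
  rw [beta, beta, div_lt_div_iff₀ (beta_denom_pos hα0 (hij.le.trans hj)) (beta_denom_pos hα0 hj)]
  have hij' : (i : ℝ) < j := Nat.cast_lt.mpr hij
  nlinarith [mul_pos (mul_pos (sub_pos.mpr hij') hα0)
    (show (0:ℝ) < (n:ℝ) + 1 by positivity)]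

lemma calc_alpha {n m : ℕ} (hn : 1 ≤ n) (hm1 : 1 ≤ m) (hmn : m ≤ n) {α : ℝ}
    (hα0 : 0 < α) (hα1 : α < 1) :
    (beta n α m / (1 - beta n α m)) * ((1 - ((m : ℝ) - 1) / n) / (((m : ℝ) - 1) / n + 1 / n))
      = α := by
  have hD : 0 < (n : ℝ) + 1 - m * (1 - α) := beta_denom_pos hα0 hmn
  have hr1 : (1 : ℝ) ≤ (m : ℝ) := by exact_mod_cast hm1
  have hrN : (m : ℝ) ≤ (n : ℝ) := by exact_mod_cast hmn
  have hN1 : (1 : ℝ) ≤ (n : ℝ) := by exact_mod_cast hn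
  have hNrpos : 0 < (n : ℝ) + 1 - m := by linarith
  have h1 : 1 - beta n α m = ((n : ℝ) + 1 - m) / ((n : ℝ) + 1 - m * (1 - α)) := by
    rw [beta]; field_simp; ring
  have hden2 : ((m : ℝ) - 1) / n + 1 / n = (m : ℝ) / n := by
    rw [← add_div]; ring_nf
  have hnum2 : 1 - ((m : ℝ) - 1) / n = ((n : ℝ) + 1 - m) / n := by
    field_simp; ring
  have hDne : (n : ℝ) + 1 - m * (1 - α) ≠ 0 := ne_of_gt hD
  have hNrne : (n : ℝ) + 1 - m ≠ 0 := ne_of_gt hNrpos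
  have hNne : (n : ℝ) ≠ 0 := by linarith
  have hmne : (m : ℝ) ≠ 0 := by linarith
  rw [h1, hden2, hnum2, beta]
  field_simp

lemma Rc_meas {n : ℕ} [MeasurableSpace Ω] (p : Fin n → Ω → ℝ) (B : ℕ → ℝ) {k j : ℕ}
    (hj : j ≤ k) (i : ℕ) :
    MeasurableSet[Ffilt p B k] {ω | Rc p (B j) ω < i} := by
  have hmeas : Measurable[Ffilt p B k] fun ω => Rc p (B j) ω := by
    have heq : (fun ω : Ω => Rc p (B j) ω)
        = fun ω => ∑ a : Fin n, if p a ω ≤ B j then 1 else 0 := by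
      funext ω; rw [Rc, Finset.card_filter]
    rw [heq]
    apply Finset.measurable_sum
    intro a _
    exact Measurable.ite
      (MeasurableSpace.measurableSet_generateFrom ⟨a, j, hj, rfl⟩)
      measurable_const measurable_const
  exact hmeas (show MeasurableSet {x : ℕ | x < i} from trivial)

lemma sigmaB_eq_min' {n : ℕ} (p : Fin n → Ω → ℝ) {α : ℝ} (hα0 : 0 < α) (ω : Ω)
    (h : ((Finset.Icc 1 n).filter fun i => Rc p (beta n α i) ω < i).Nonempty) :
    sigmaB p (beta n α) ω
      = beta n α (((Finset.Icc 1 n).filter fun i => Rc p (beta n α i) ω < i).min' h) := by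
  have hmem := Finset.min'_mem _ h
  obtain ⟨hmIcc, _⟩ := Finset.mem_filter.mp hmem
  obtain ⟨hm1, hmn⟩ := Finset.mem_Icc.mp hmIcc
  have hinf : ((Finset.Icc 1 n).filter fun i => Rc p (beta n α i) ω < i).inf' h (beta n α)
      = beta n α (((Finset.Icc 1 n).filter fun i => Rc p (beta n α i) ω < i).min' h) := by
    refine le_antisymm (Finset.inf'_le _ hmem) ?_
    apply Finset.le_inf'
    intro i hi
    exact beta_mono hα0 (Finset.min'_le _ _ hi)
      (Finset.mem_Icc.mp (Finset.mem_filter.mp hi).1).2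
  simp only [sigmaB, dif_pos h, hinf]
  exact min_eq_left (beta_mono hα0 hmn le_rfl)

/-- (i) `τ_SD ≤ σ`; (ii) `\hatα_n(σ) = α·1(R(σ) < n)`;
(iii) `σ` is a stopping time w.r.t. the filtration `(F_t^T)_{t∈T}`, `T = {0,β_1,...,β_n}`. -/
theorem sigma_properties {n : ℕ} [MeasurableSpace Ω] (p : Fin n → Ω → ℝ) (α : ℝ)
    (hn : 1 ≤ n) (hα : α ∈ Set.Ioo (0 : ℝ) 1)
    (hp01 : ∀ i ω, p i ω ∈ Set.Icc (0 : ℝ) 1) :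
    (∀ ω : Ω, tauSD p (beta n α) ω ≤ sigmaB p (beta n α) ω)
    ∧ (∀ ω : Ω, alphaHat p (sigmaB p (beta n α) ω) ω
        = α * (if Rc p (sigmaB p (beta n α) ω) ω < n then 1 else 0))
    ∧ (∀ k : ℕ, k ≤ n →
        MeasurableSet[Ffilt p (beta n α) k] {ω | sigmaB p (beta n α) ω ≤ beta n α k}) := by
  obtain ⟨hα0, hα1⟩ := hα
  refine ⟨?_, ?_, ?_⟩
  · -- (i) τ_SD ≤ σ
    intro ω
    have hσ0 : 0 ≤ sigmaB p (beta n α) ω := by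
      simp only [sigmaB]
      refine le_min ?_ (beta_nonneg hα0 le_rfl)
      split_ifs with hF
      · apply Finset.le_inf'
        intro i hi
        exact beta_nonneg hα0 (Finset.mem_Icc.mp (Finset.mem_filter.mp hi).1).2
      · exact beta_nonneg hα0 le_rfl
    unfold tauSD
    split_ifs with hS
    · apply Finset.sup'_le
      intro i hi
      simp only [Finset.mem_filter, Finset.mem_Icc] at hi
      obtain ⟨⟨hi1, hin⟩, hiprop⟩ := hi
      simp only [sigmaB]
      refine le_min ?_ (beta_mono hα0 hin le_rfl)
      split_ifs with hF
      · apply Finset.le_inf'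
        intro m hm
        obtain ⟨hmIcc, hmR⟩ := Finset.mem_filter.mp hm
        obtain ⟨hm1, hmn⟩ := Finset.mem_Icc.mp hmIcc
        have him : i ≤ m := by
          by_contra hc
          push_neg at hc
          exact absurd (hiprop m ⟨hm1, hc.le⟩) (by omega)
        exact beta_mono hα0 him hmn
      · exact beta_mono hα0 hin le_rfl
    · exact hσ0
  · -- (ii) α̂(σ) = α·1(R(σ) < n)
    intro ω
    by_cases hF : ((Finset.Icc 1 n).filter fun i => Rc p (beta n α i) ω < i).Nonempty
    · have hσ := sigmaB_eq_min' p hα0 ω hF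
      have hmem := Finset.min'_mem _ hF
      set m := ((Finset.Icc 1 n).filter fun i => Rc p (beta n α i) ω < i).min' hF with hmdef
      obtain ⟨hmIcc, hmR⟩ := Finset.mem_filter.mp hmem
      obtain ⟨hm1, hmn⟩ := Finset.mem_Icc.mp hmIcc
      have hRσ : Rc p (beta n α m) ω = m - 1 := by
        have hlb : m - 1 ≤ Rc p (beta n α m) ω := by
          rcases Nat.eq_or_lt_of_le hm1 with h1 | h2
          · omega
          · have hnot : m - 1 ∉ ((Finset.Icc 1 n).filter
                fun i => Rc p (beta n α i) ω < i) := fun hmem' =>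
              absurd (Finset.min'_le _ _ hmem') (by omega)
            have hnotlt : ¬ (Rc p (beta n α (m - 1)) ω < m - 1) := fun hcon =>
              hnot (Finset.mem_filter.mpr
                ⟨Finset.mem_Icc.mpr ⟨by omega, by omega⟩, hcon⟩)
            have h' := Rc_mono p (beta_mono hα0 (Nat.sub_le m 1) hmn) ω
            omega
        omega
      rw [hσ]
      rw [alphaHat, hRσ, if_pos (show m - 1 < n by omega), mul_one]
      rw [Nat.cast_sub hm1, Nat.cast_one]
      exact calc_alpha hn hm1 hmn hα0 hα1
    · have hRn : Rc p (beta n α n) ω = n := by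
        have hnot : n ∉ ((Finset.Icc 1 n).filter fun i => Rc p (beta n α i) ω < i) :=
          fun h => hF ⟨n, h⟩
        have h2 : ¬ (Rc p (beta n α n) ω < n) := fun hc =>
          hnot (Finset.mem_filter.mpr ⟨Finset.mem_Icc.mpr ⟨hn, le_rfl⟩, hc⟩)
        have := Rc_le_n p (beta n α n) ω
        omega
      have hσ : sigmaB p (beta n α) ω = beta n α n := by
        simp only [sigmaB, dif_neg hF]
        exact min_self _
      have hNne : (n : ℝ) ≠ 0 := Nat.cast_ne_zero.mpr (by omega)
      rw [hσ, alphaHat, hRn, if_neg (lt_irrefl n)]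
      simp [div_self hNne]
  · -- (iii) σ is a stopping time
    intro k hk
    rcases eq_or_lt_of_le hk with heq | hk'
    · have huniv : {ω | sigmaB p (beta n α) ω ≤ beta n α k} = Set.univ :=
        Set.eq_univ_of_forall fun ω => by
          simp only [Set.mem_setOf_eq, sigmaB, heq]
          exact min_le_right _ _
      rw [huniv]
      exact MeasurableSet.univ
    · have hset : {ω | sigmaB p (beta n α) ω ≤ beta n α k}
          = ⋃ i ∈ Finset.Icc 1 k, {ω | Rc p (beta n α i) ω < i} := by
        ext ω
        simp only [Set.mem_setOf_eq, Set.mem_iUnion, exists_prop]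
        constructor
        · intro hle
          by_contra hc
          push_neg at hc
          by_cases hF : ((Finset.Icc 1 n).filter fun i => Rc p (beta n α i) ω < i).Nonempty
          · have hσ := sigmaB_eq_min' p hα0 ω hF
            have hmem := Finset.min'_mem _ hF
            set m := ((Finset.Icc 1 n).filter fun i => Rc p (beta n α i) ω < i).min' hF
              with hmdef
            obtain ⟨hmIcc, hmR⟩ := Finset.mem_filter.mp hmem
            obtain ⟨hm1, hmn⟩ := Finset.mem_Icc.mp hmIcc
            have hmk : m ≤ k := by
              by_contra hkm
              push_neg at hkm
              have := beta_strictMono hα0 hkm hmn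
              rw [hσ] at hle
              linarith
            exact absurd hmR
              (by have := hc m (Finset.mem_Icc.mpr ⟨hm1, hmk⟩); omega)
          · have hσ : sigmaB p (beta n α) ω = beta n α n := by
              simp only [sigmaB, dif_neg hF]
              exact min_self _
            have := beta_strictMono hα0 hk' le_rfl
            rw [hσ] at hle
            linarith
        · rintro ⟨i, hiIcc, hiR⟩
          obtain ⟨hi1, hik⟩ := Finset.mem_Icc.mp hiIcc
          have hiF : i ∈ (Finset.Icc 1 n).filter fun i => Rc p (beta n α i) ω < i :=
            Finset.mem_filter.mpr
              ⟨Finset.mem_Icc.mpr ⟨hi1, hik.trans hk'.le⟩, hiR⟩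
          have hFne : ((Finset.Icc 1 n).filter
              fun i => Rc p (beta n α i) ω < i).Nonempty := ⟨i, hiF⟩
          simp only [sigmaB, dif_pos hFne]
          exact le_trans (min_le_left _ _)
            ((Finset.inf'_le _ hiF).trans (beta_mono hα0 hik hk'.le))
      rw [hset]
      exact (Finset.Icc 1 k).measurableSet_biUnion
        fun i hi => Rc_meas p _ (Finset.mem_Icc.mp hi).2 i

end
end

section
/- Suppose the p-values are PRDS on I_0 and each p_i, i in I_0, is stochastically larger than the uniform distribution on (0,1), i.e. P(p_i <= x) <= x for all x in [0,1]. Then for the step-down test with critical values beta_i = i*alpha/(n+1-i*(1-alpha)) one has E[V(tau_SD)/tau_SD] <= n_0, where V(tau_SD)/tau_SD is taken to be 0 on the event tau_SD = 0. -/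
open MeasureTheory Finset
open scoped Classical

noncomputable section

variable {Ω : Type*}

/-- Positive regression dependence on the subset `I` (PRDS): for each `i ∈ I` and each
coordinatewise nondecreasing integrable `f`, `x ↦ E[f(p₁,...,pₙ) ∣ p_i = x]` is
nondecreasing, i.e. some nondecreasing `g` composed with `p_i` is a version of the
conditional expectation of `f(p)` given `σ(p_i)`. -/
def PRDS {n : ℕ} [MeasurableSpace Ω] (μ : Measure Ω) (p : Fin n → Ω → ℝ)
    (I : Finset (Fin n)) : Prop :=
  ∀ i ∈ I, ∀ f : (Fin n → ℝ) → ℝ, Monotone f →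
    Integrable (fun ω => f fun j => p j ω) μ →
      ∃ g : ℝ → ℝ, Monotone g ∧
        (fun ω => g (p i ω))
          =ᵐ[μ] μ[(fun ω => f fun j => p j ω)|MeasurableSpace.comap (p i) inferInstance]

-- ===== auxiliary lemmas =====

lemma beta_denom_pos_s10 {n k : ℕ} {α : ℝ} (hα : α ∈ Set.Ioo (0:ℝ) 1) (hk : k ≤ n + 1) :
    0 < (n : ℝ) + 1 - k * (1 - α) := by
  have hk' : (k : ℝ) ≤ (n : ℝ) + 1 := by exact_mod_cast hk
  nlinarith [hα.1, hα.2]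

lemma beta_nonneg_s10 {n k : ℕ} {α : ℝ} (hα : α ∈ Set.Ioo (0:ℝ) 1) (hk : k ≤ n + 1) :
    0 ≤ beta n α k :=
  div_nonneg (by have := hα.1.le; positivity) (beta_denom_pos_s10 hα hk).le

lemma beta_pos {n k : ℕ} {α : ℝ} (hα : α ∈ Set.Ioo (0:ℝ) 1) (hk1 : 1 ≤ k) (hk : k ≤ n + 1) :
    0 < beta n α k := by
  apply div_pos _ (beta_denom_pos_s10 hα hk)
  have : (1:ℝ) ≤ (k:ℝ) := by exact_mod_cast hk1
  nlinarith [hα.1]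

lemma beta_le_one {n k : ℕ} {α : ℝ} (hα : α ∈ Set.Ioo (0:ℝ) 1) (hk : k ≤ n + 1) :
    beta n α k ≤ 1 := by
  rw [beta, div_le_one (beta_denom_pos_s10 hα hk)]
  have hk' : (k : ℝ) ≤ (n : ℝ) + 1 := by exact_mod_cast hk
  nlinarith [hα.1, hα.2]

lemma beta_mono_s10 {n : ℕ} {α : ℝ} (hα : α ∈ Set.Ioo (0:ℝ) 1) {j k : ℕ}
    (hjk : j ≤ k) (hk : k ≤ n + 1) :
    beta n α j ≤ beta n α k := by
  rw [beta, beta, div_le_div_iff₀ (beta_denom_pos_s10 hα (hjk.trans hk)) (beta_denom_pos_s10 hα hk)]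
  have hjk' : (j : ℝ) ≤ (k : ℝ) := by exact_mod_cast hjk
  nlinarith [hα.1, hα.2, Nat.cast_nonneg (α := ℝ) n, mul_nonneg (mul_nonneg hα.1.le
    (sub_nonneg.2 hjk')) (by positivity : (0:ℝ) ≤ (n:ℝ) + 1)]

lemma integral_Iic_mul_le (ν : Measure ℝ) [IsFiniteMeasure ν] {h : ℝ → ℝ}
    (hh : Antitone h) (hint : Integrable h ν) {x y : ℝ} (hxy : x ≤ y) :
    (∫ u in Set.Iic y, h u ∂ν) * (ν (Set.Iic x)).toReal ≤
      (∫ u in Set.Iic x, h u ∂ν) * (ν (Set.Iic y)).toReal := by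
  have hdisj : Disjoint (Set.Iic x) (Set.Ioc x y) := Set.Iic_disjoint_Ioc le_rfl
  have hunion : Set.Iic x ∪ Set.Ioc x y = Set.Iic y := Set.Iic_union_Ioc_eq_Iic hxy
  have hsplit : ∫ u in Set.Iic y, h u ∂ν
      = (∫ u in Set.Iic x, h u ∂ν) + ∫ u in Set.Ioc x y, h u ∂ν := by
    rw [← hunion, setIntegral_union hdisj measurableSet_Ioc hint.integrableOn hint.integrableOn]
  have hmeas : (ν (Set.Iic y)).toReal = (ν (Set.Iic x)).toReal + (ν (Set.Ioc x y)).toReal := by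
    rw [← hunion, measure_union hdisj measurableSet_Ioc,
      ENNReal.toReal_add (measure_ne_top ν _) (measure_ne_top ν _)]
  set a := ∫ u in Set.Iic x, h u ∂ν with ha_def
  set b := ∫ u in Set.Ioc x y, h u ∂ν with hb_def
  set s := (ν (Set.Iic x)).toReal with hs_def
  set t := (ν (Set.Ioc x y)).toReal with ht_def
  have hs : 0 ≤ s := ENNReal.toReal_nonneg
  have ht : 0 ≤ t := ENNReal.toReal_nonneg
  have hb : b ≤ h x * t := by
    have h1 : ∫ u in Set.Ioc x y, h u ∂ν ≤ ∫ _u in Set.Ioc x y, h x ∂ν :=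
      setIntegral_mono_on hint.integrableOn
        (integrableOn_const (measure_ne_top ν _)) measurableSet_Ioc
        (fun u hu => hh hu.1.le)
    have h2 : ∫ _u in Set.Ioc x y, h x ∂ν = t * h x := setIntegral_const _
    rw [hb_def]
    rw [h2] at h1
    linarith [h1]
  have ha : h x * s ≤ a := by
    have h1 : ∫ _u in Set.Iic x, h x ∂ν ≤ ∫ u in Set.Iic x, h u ∂ν :=
      setIntegral_mono_on (integrableOn_const (measure_ne_top ν _))
        hint.integrableOn measurableSet_Iic
        (fun u hu => hh (Set.mem_Iic.1 hu))
    have h2 : ∫ _u in Set.Iic x, h x ∂ν = s * h x := setIntegral_const _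
    rw [ha_def]
    rw [h2] at h1
    linarith [h1]
  rw [hsplit, hmeas]
  nlinarith [mul_le_mul_of_nonneg_right hb hs, mul_le_mul_of_nonneg_right ha ht]

/-- Abstract correlation inequality given an antitone version of `E[1_D | σ(U)]`. -/
lemma antitone_condexp_ineq [mΩ : MeasurableSpace Ω] (μ : Measure Ω)
    [IsProbabilityMeasure μ] (U : Ω → ℝ) (hU : Measurable U)
    (D : Set Ω) (hD : MeasurableSet D) (h : ℝ → ℝ) (hhm : Measurable h)
    (hhanti : Antitone h)
    (hcond : (fun ω => h (U ω))
      =ᵐ[μ] μ[D.indicator (fun _ => (1:ℝ)) | MeasurableSpace.comap U inferInstance])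
    {x y : ℝ} (hxy : x ≤ y) :
    (μ (D ∩ {ω | U ω ≤ y})).toReal * (μ {ω | U ω ≤ x}).toReal ≤
    (μ (D ∩ {ω | U ω ≤ x})).toReal * (μ {ω | U ω ≤ y}).toReal := by
  have hm : MeasurableSpace.comap U inferInstance ≤ mΩ := hU.comap_le
  haveI : SigmaFinite (μ.trim hm) := (isFiniteMeasure_trim hm).toSigmaFinite
  have hindint : Integrable (D.indicator fun _ => (1:ℝ)) μ :=
    (integrable_const (1:ℝ)).indicator hD
  haveI : IsProbabilityMeasure (μ.map U) := Measure.isProbabilityMeasure_map hU.aemeasurable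
  have hkey : ∀ z : ℝ, (μ (D ∩ {ω | U ω ≤ z})).toReal
      = ∫ u in Set.Iic z, h u ∂(μ.map U) := by
    intro z
    have hA : MeasurableSet[MeasurableSpace.comap U inferInstance] (U ⁻¹' Set.Iic z) :=
      ⟨Set.Iic z, measurableSet_Iic, rfl⟩
    have e1 : ∫ u in Set.Iic z, h u ∂(μ.map U)
        = ∫ ω in U ⁻¹' Set.Iic z, h (U ω) ∂μ :=
      setIntegral_map measurableSet_Iic hhm.aestronglyMeasurable hU.aemeasurable
    have e2 : ∫ ω in U ⁻¹' Set.Iic z, h (U ω) ∂μ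
        = ∫ ω in U ⁻¹' Set.Iic z,
            (μ[D.indicator (fun _ => (1:ℝ)) | MeasurableSpace.comap U inferInstance]) ω ∂μ :=
      setIntegral_congr_ae (hm _ hA) (hcond.mono fun ω hω _ => hω)
    have e3 : ∫ ω in U ⁻¹' Set.Iic z,
          (μ[D.indicator (fun _ => (1:ℝ)) | MeasurableSpace.comap U inferInstance]) ω ∂μ
        = ∫ ω in U ⁻¹' Set.Iic z, D.indicator (fun _ => (1:ℝ)) ω ∂μ :=
      setIntegral_condExp hm hindint hA
    have e4 : ∫ ω in U ⁻¹' Set.Iic z, D.indicator (fun _ => (1:ℝ)) ω ∂μ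
        = (μ (D ∩ U ⁻¹' Set.Iic z)).toReal := by
      rw [setIntegral_indicator hD, setIntegral_const, Set.inter_comm]
      simp; rfl
    have e5 : D ∩ U ⁻¹' Set.Iic z = D ∩ {ω | U ω ≤ z} := rfl
    rw [e1, e2, e3, e4, e5]
  have hν : ∀ z : ℝ, (μ {ω | U ω ≤ z}).toReal = ((μ.map U) (Set.Iic z)).toReal := by
    intro z
    rw [Measure.map_apply hU measurableSet_Iic]
    rfl
  have hhint : Integrable h (μ.map U) := by
    rw [integrable_map_measure hhm.aestronglyMeasurable hU.aemeasurable]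
    exact integrable_condExp.congr hcond.symm
  rw [hkey, hkey, hν, hν]
  exact integral_Iic_mul_le (μ.map U) hhanti hhint hxy

lemma prds_key {n : ℕ} [mΩ : MeasurableSpace Ω] (μ : Measure Ω) [IsProbabilityMeasure μ]
    (p : Fin n → Ω → ℝ) (hpm : ∀ i, Measurable (p i)) (I0 : Finset (Fin n)) (i : Fin n)
    (hi : i ∈ I0) (hprds : PRDS μ p I0)
    (C : Set (Fin n → ℝ)) (hCmeas : MeasurableSet {ω | (fun j => p j ω) ∈ C})
    (hCanti : ∀ x y : Fin n → ℝ, x ≤ y → y ∈ C → x ∈ C)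
    {x y : ℝ} (hxy : x ≤ y) :
    (μ ({ω | (fun j => p j ω) ∈ C} ∩ {ω | p i ω ≤ y})).toReal * (μ {ω | p i ω ≤ x}).toReal ≤
    (μ ({ω | (fun j => p j ω) ∈ C} ∩ {ω | p i ω ≤ x})).toReal * (μ {ω | p i ω ≤ y}).toReal := by
  set D : Set Ω := {ω | (fun j => p j ω) ∈ C} with hD_def
  set f : (Fin n → ℝ) → ℝ := fun v => 1 - C.indicator (fun _ => (1:ℝ)) v with hf_def
  have hfmono : Monotone f := by
    intro v w hvw
    simp only [hf_def, sub_le_sub_iff_left, Set.indicator_apply]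
    by_cases hw : w ∈ C
    · simp [hw, hCanti v w hvw hw]
    · by_cases hv : v ∈ C <;> simp [hv, hw]
  have hind : (fun ω => f fun j => p j ω)
      = (fun _ => (1:ℝ)) - D.indicator (fun _ => (1:ℝ)) := by
    funext ω
    simp only [hf_def, Pi.sub_apply, Set.indicator_apply, hD_def, Set.mem_setOf_eq]
  have hindint : Integrable (D.indicator fun _ => (1:ℝ)) μ :=
    (integrable_const (1:ℝ)).indicator hCmeas
  have hfint : Integrable (fun ω => f fun j => p j ω) μ := by
    rw [hind]; exact (integrable_const (1:ℝ)).sub hindint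
  obtain ⟨g, hgmono, hgae⟩ := hprds i hi f hfmono hfint
  have hm : MeasurableSpace.comap (p i) inferInstance ≤ mΩ := (hpm i).comap_le
  haveI : SigmaFinite (μ.trim hm) := (isFiniteMeasure_trim hm).toSigmaFinite
  have hhanti : Antitone (fun u => 1 - g u) := fun u v huv => by
    simp only [sub_le_sub_iff_left]; exact hgmono huv
  have hhm : Measurable (fun u => 1 - g u) := measurable_const.sub hgmono.measurable
  have h2 : μ[(fun _ => (1:ℝ)) - D.indicator (fun _ => (1:ℝ))|MeasurableSpace.comap (p i) inferInstance]
      =ᵐ[μ] μ[(fun _ : Ω => (1:ℝ))|MeasurableSpace.comap (p i) inferInstance]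
        - μ[D.indicator (fun _ => (1:ℝ))|MeasurableSpace.comap (p i) inferInstance] :=
    condExp_sub (integrable_const 1) hindint _
  have h3 : μ[(fun _ : Ω => (1:ℝ))|MeasurableSpace.comap (p i) inferInstance]
      = fun _ => (1:ℝ) := condExp_const hm 1
  have hgae' : (fun ω => g (p i ω))
      =ᵐ[μ] μ[(fun _ => (1:ℝ)) - D.indicator (fun _ => (1:ℝ))|MeasurableSpace.comap (p i) inferInstance] := by
    rw [← hind]; exact hgae
  have hcond : (fun ω => (fun u => 1 - g u) (p i ω))
      =ᵐ[μ] μ[D.indicator (fun _ => (1:ℝ))|MeasurableSpace.comap (p i) inferInstance] := by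
    filter_upwards [hgae', h2] with ω hω h2ω
    show 1 - g (p i ω) = _
    rw [hω, h2ω]
    simp [h3]
  exact antitone_condexp_ineq μ (p i) (hpm i) D hCmeas _ hhm hhanti hcond hxy

lemma telescope_bound (n : ℕ) (β' A B ν' : ℕ → ℝ)
    (hβpos : ∀ k, 1 ≤ k → k ≤ n → 0 < β' k)
    (hνmono : ∀ k, 1 ≤ k → k ≤ n → ν' k ≤ ν' (k+1))
    (hνnonneg : ∀ k, 0 ≤ ν' k)
    (hsup : ∀ k, 1 ≤ k → k ≤ n → ν' k ≤ β' k)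
    (hAnonneg : ∀ k, 0 ≤ A k)
    (hBnonneg : ∀ k, 0 ≤ B k)
    (hAle : ∀ k, 1 ≤ k → k ≤ n → A k ≤ ν' k)
    (hBle : ∀ k, 1 ≤ k → k ≤ n → B k ≤ ν' k)
    (hBA : ∀ k, 1 ≤ k → k ≤ n → B k ≤ A k)
    (hkey : ∀ k, 1 ≤ k → k ≤ n → A (k+1) * ν' k ≤ B k * ν' (k+1))
    (htop : A (n+1) = 0) :
    ∑ k ∈ Finset.Icc 1 n, (A k - B k) / β' k ≤ 1 := by
  have main : ∀ t m, m + t = n + 1 → 1 ≤ m →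
      ((0 < ν' m → ∑ k ∈ Finset.Icc m n, (A k - B k) / β' k ≤ A m / ν' m) ∧
        ∑ k ∈ Finset.Icc m n, (A k - B k) / β' k ≤ 1) := by
    intro t
    induction t with
    | zero =>
      intro m hmn _
      have hm : m = n + 1 := by omega
      subst hm
      rw [Finset.Icc_eq_empty (by omega)]
      simp only [Finset.sum_empty]
      refine ⟨fun _ => ?_, by norm_num⟩
      rw [htop]
      simp
    | succ t ih =>
      intro m hmn hm1
      have hmn' : m ≤ n := by omega
      have hsum : ∑ k ∈ Finset.Icc m n, (A k - B k) / β' k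
          = (A m - B m) / β' m + ∑ k ∈ Finset.Icc (m+1) n, (A k - B k) / β' k := by
        rw [Finset.Icc_eq_cons_Ioc hmn', Finset.sum_cons, ← Finset.Icc_add_one_left_eq_Ioc]
      have ihm := ih (m+1) (by omega) (by omega)
      have part1 : 0 < ν' m → ∑ k ∈ Finset.Icc m n, (A k - B k) / β' k ≤ A m / ν' m := by
        intro hν
        have hν1 : 0 < ν' (m+1) := lt_of_lt_of_le hν (hνmono m hm1 hmn')
        have e1 : (A m - B m) / β' m ≤ (A m - B m) / ν' m := by
          gcongr
          · linarith [hBA m hm1 hmn']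
          · exact hsup m hm1 hmn'
        have e2 : ∑ k ∈ Finset.Icc (m+1) n, (A k - B k) / β' k ≤ A (m+1) / ν' (m+1) :=
          ihm.1 hν1
        have e3 : A (m+1) / ν' (m+1) ≤ B m / ν' m := by
          rw [div_le_div_iff₀ hν1 hν]
          exact hkey m hm1 hmn'
        have e4 : (A m - B m) / ν' m + B m / ν' m = A m / ν' m := by
          rw [← add_div, sub_add_cancel]
        rw [hsum]
        linarith
      refine ⟨part1, ?_⟩
      rcases eq_or_lt_of_le (hνnonneg m) with hν0 | hν
      · have hA0 : A m = 0 :=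
          le_antisymm (hν0 ▸ hAle m hm1 hmn') (hAnonneg m)
        have hB0 : B m = 0 :=
          le_antisymm (hν0 ▸ hBle m hm1 hmn') (hBnonneg m)
        rw [hsum, hA0, hB0]
        simp only [sub_self, zero_div, zero_add]
        exact ihm.2
      · have h1 := part1 hν
        have h2 : A m / ν' m ≤ 1 := by
          rw [div_le_one hν]
          exact hAle m hm1 hmn'
        exact le_trans h1 h2
  exact (main n 1 (by omega) le_rfl).2

/-- Event that the first `k` step-down conditions hold. -/
def Dpred {n : ℕ} (p : Fin n → Ω → ℝ) (crit : ℕ → ℝ) (k : ℕ) : Set Ω :=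
  {ω | ∀ j ∈ Finset.Icc 1 k, j ≤ Rc p (crit j) ω}

lemma Dpred_antitone {n : ℕ} (p : Fin n → Ω → ℝ) (crit : ℕ → ℝ) {k l : ℕ} (hkl : k ≤ l) :
    Dpred p crit l ⊆ Dpred p crit k := by
  intro ω hω j hj
  exact hω j (Finset.mem_Icc.2 ⟨(Finset.mem_Icc.1 hj).1, (Finset.mem_Icc.1 hj).2.trans hkl⟩)

lemma Dpred_top_empty {n : ℕ} (p : Fin n → Ω → ℝ) (crit : ℕ → ℝ) :
    Dpred p crit (n+1) = ∅ := by
  ext ω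
  simp only [Set.mem_empty_iff_false, iff_false, Dpred, Set.mem_setOf_eq]
  intro h
  have h1 := h (n+1) (Finset.mem_Icc.2 ⟨by omega, le_rfl⟩)
  have h2 := Rc_le_n p (crit (n+1)) ω
  omega

lemma tau_pointwise {n : ℕ} (p : Fin n → Ω → ℝ) (I0 : Finset (Fin n)) (crit : ℕ → ℝ)
    (hmono : ∀ j k, 1 ≤ j → j ≤ k → k ≤ n → crit j ≤ crit k) (hn : 1 ≤ n) (ω : Ω) :
    (Vc p I0 (tauSD p crit ω) ω : ℝ) / tauSD p crit ω
      = ∑ k ∈ Finset.Icc 1 n, ∑ i ∈ I0,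
          Set.indicator ((Dpred p crit k ∩ (Dpred p crit (k+1))ᶜ) ∩ {ω' | p i ω' ≤ crit k})
            (fun _ => (crit k)⁻¹) ω := by
  set S := ((Finset.Icc 1 n).filter fun i =>
      ∀ j ∈ Finset.Icc 1 i, j ≤ Rc p (crit j) ω) with hS_def
  have hmemS : ∀ k, k ∈ S ↔ (1 ≤ k ∧ k ≤ n ∧ ω ∈ Dpred p crit k) := by
    intro k
    rw [hS_def, Finset.filter_congr_decidable]
    constructor
    · intro h
      have h1 := Finset.mem_filter.1 h
      have h2 := Finset.mem_Icc.1 h1.1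
      exact ⟨h2.1, h2.2, h1.2⟩
    · intro h
      exact Finset.mem_filter.2 ⟨Finset.mem_Icc.2 ⟨h.1, h.2.1⟩, h.2.2⟩
  have htau : tauSD p crit ω = if h : S.Nonempty then S.sup' h crit else 0 := rfl
  by_cases hD1 : ω ∈ Dpred p crit 1
  · -- nonempty case
    have h1S : (1 : ℕ) ∈ S := (hmemS 1).2 ⟨le_rfl, hn, hD1⟩
    have hne : S.Nonempty := ⟨1, h1S⟩
    set K := S.max' hne with hK_def
    have hKS : K ∈ S := S.max'_mem hne
    obtain ⟨hK1, hKn, hKD⟩ := (hmemS K).1 hKS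
    have hKD' : ω ∉ Dpred p crit (K+1) := by
      intro hcon
      have hKn' : K + 1 ≤ n := by
        have := hcon (K+1) (Finset.mem_Icc.2 ⟨by omega, le_rfl⟩)
        have := Rc_le_n p (crit (K+1)) ω
        omega
      have := S.le_max' (K+1) ((hmemS (K+1)).2 ⟨by omega, hKn', hcon⟩)
      omega
    have htauK : tauSD p crit ω = crit K := by
      rw [htau, dif_pos hne]
      refine le_antisymm (Finset.sup'_le hne crit fun i hi => ?_) (Finset.le_sup' crit hKS)
      obtain ⟨hi1, hin, _⟩ := (hmemS i).1 hi
      exact hmono i K hi1 (S.le_max' i hi) hKn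
    rw [htauK]
    rw [Finset.sum_eq_single_of_mem K (Finset.mem_Icc.2 ⟨hK1, hKn⟩)]
    · -- the K term
      have hωK : ω ∈ Dpred p crit K ∩ (Dpred p crit (K+1))ᶜ := ⟨hKD, hKD'⟩
      have : ∀ i ∈ I0,
          Set.indicator ((Dpred p crit K ∩ (Dpred p crit (K+1))ᶜ) ∩ {ω' | p i ω' ≤ crit K})
            (fun _ => (crit K)⁻¹) ω = if p i ω ≤ crit K then (crit K)⁻¹ else 0 := by
        intro i _
        rw [Set.indicator_apply]
        by_cases hp : p i ω ≤ crit K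
        · rw [if_pos ⟨hωK, hp⟩, if_pos hp]
        · rw [if_neg (fun hcon => hp hcon.2), if_neg hp]
      rw [Finset.sum_congr rfl this, ← Finset.sum_filter]
      simp only [Finset.sum_const, nsmul_eq_mul]
      rw [Vc, div_eq_mul_inv]
    · -- other terms vanish
      intro k hk hkK
      obtain ⟨hk1, hkn⟩ := Finset.mem_Icc.1 hk
      have hknot : ω ∉ Dpred p crit k ∩ (Dpred p crit (k+1))ᶜ := by
        rcases Nat.lt_or_ge k K with hlt | hge
        · intro ⟨_, hc⟩
          exact hc (Dpred_antitone p crit (by omega : k + 1 ≤ K) hKD)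
        · have hkK' : K < k := by omega
          intro ⟨hc, _⟩
          have := S.le_max' k ((hmemS k).2 ⟨hk1, hkn, hc⟩)
          omega
      apply Finset.sum_eq_zero
      intro i _
      exact Set.indicator_of_notMem (fun hcon => hknot hcon.1) _
  · -- empty case : tau = 0
    have hSe : ¬ S.Nonempty := by
      rintro ⟨i, hi⟩
      obtain ⟨hi1, _, hiD⟩ := (hmemS i).1 hi
      exact hD1 (Dpred_antitone p crit hi1 hiD)
    rw [htau, dif_neg hSe, div_zero]
    symm
    apply Finset.sum_eq_zero
    intro k hk
    apply Finset.sum_eq_zero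
    intro i _
    refine Set.indicator_of_notMem (fun hcon => ?_) _
    exact hD1 (Dpred_antitone p crit (Finset.mem_Icc.1 hk).1 hcon.1.1)


/-- under PRDS on `I_0` and null p-values stochastically larger than
uniform, `E[V(τ_SD)/τ_SD] ≤ n₀` for the `β_i`-based SD test. -/
theorem v_over_tau_le_n0 {n : ℕ} [MeasurableSpace Ω] (μ : Measure Ω)
    [IsProbabilityMeasure μ] (p : Fin n → Ω → ℝ) (I0 : Finset (Fin n)) (α : ℝ)
    (hn : 1 ≤ n) (hα : α ∈ Set.Ioo (0 : ℝ) 1) (hI0 : I0.Nonempty)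
    (hp01 : ∀ i ω, p i ω ∈ Set.Icc (0 : ℝ) 1) (hpm : ∀ i, Measurable (p i))
    (hprds : PRDS μ p I0)
    (hstoch : ∀ i ∈ I0, ∀ x ∈ Set.Icc (0 : ℝ) 1, μ {ω | p i ω ≤ x} ≤ ENNReal.ofReal x) :
    ∫ ω, (Vc p I0 (tauSD p (beta n α) ω) ω : ℝ) / tauSD p (beta n α) ω ∂μ
      ≤ I0.card := by
  have hmono' : ∀ j k, 1 ≤ j → j ≤ k → k ≤ n → beta n α j ≤ beta n α k :=
    fun j k _ hjk hk => beta_mono_s10 hα hjk (by omega)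
  have hRc : ∀ t : ℝ, Measurable fun ω => Rc p t ω := by
    intro t
    have : (fun ω => Rc p t ω) = fun ω => ∑ i : Fin n, if p i ω ≤ t then 1 else 0 := by
      funext ω; rw [Rc, Finset.card_filter]
    rw [this]
    exact Finset.measurable_sum _ fun i _ =>
      Measurable.ite (measurableSet_le (hpm i) measurable_const) measurable_const
        measurable_const
  have hsetm : ∀ (i : Fin n) (t : ℝ), MeasurableSet {ω | p i ω ≤ t} :=
    fun i t => measurableSet_le (hpm i) measurable_const
  have hDmeas : ∀ k, MeasurableSet (Dpred p (beta n α) k) := by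
    intro k
    have hD : Dpred p (beta n α) k = ⋂ j ∈ Finset.Icc 1 k, {ω | j ≤ Rc p (beta n α j) ω} := by
      ext ω; simp [Dpred]
    rw [hD]
    exact MeasurableSet.biInter (Finset.Icc 1 k).countable_toSet fun j _ =>
      measurableSet_le measurable_const (hRc _)
  have hEmeas : ∀ (k : ℕ) (i : Fin n), MeasurableSet
      ((Dpred p (beta n α) k ∩ (Dpred p (beta n α) (k+1))ᶜ) ∩ {ω' | p i ω' ≤ beta n α k}) :=
    fun k i => (((hDmeas k).inter (hDmeas (k+1)).compl).inter (hsetm i _))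
  have heqfun : (fun ω => (Vc p I0 (tauSD p (beta n α) ω) ω : ℝ) / tauSD p (beta n α) ω)
      = fun ω => ∑ k ∈ Finset.Icc 1 n, ∑ i ∈ I0,
          Set.indicator ((Dpred p (beta n α) k ∩ (Dpred p (beta n α) (k+1))ᶜ)
              ∩ {ω' | p i ω' ≤ beta n α k}) (fun _ => (beta n α k)⁻¹) ω :=
    funext (tau_pointwise p I0 (beta n α) hmono' hn)
  rw [heqfun]
  rw [integral_finset_sum _ (fun k _ => integrable_finset_sum _ fun i _ =>
    (integrable_const _).indicator (hEmeas k i))]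
  have hstep2 : ∀ k ∈ Finset.Icc 1 n,
      (∫ ω, ∑ i ∈ I0, Set.indicator ((Dpred p (beta n α) k ∩ (Dpred p (beta n α) (k+1))ᶜ)
          ∩ {ω' | p i ω' ≤ beta n α k}) (fun _ => (beta n α k)⁻¹) ω ∂μ)
      = ∑ i ∈ I0, (μ ((Dpred p (beta n α) k ∩ (Dpred p (beta n α) (k+1))ᶜ)
          ∩ {ω' | p i ω' ≤ beta n α k})).toReal * (beta n α k)⁻¹ := by
    intro k _
    rw [integral_finset_sum _ fun i _ => (integrable_const _).indicator (hEmeas k i)]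
    exact Finset.sum_congr rfl fun i _ => by
      rw [integral_indicator_const _ (hEmeas k i), smul_eq_mul]; rfl
  rw [Finset.sum_congr rfl hstep2, Finset.sum_comm]
  have hper : ∀ i ∈ I0, ∑ k ∈ Finset.Icc 1 n,
      (μ ((Dpred p (beta n α) k ∩ (Dpred p (beta n α) (k+1))ᶜ)
        ∩ {ω' | p i ω' ≤ beta n α k})).toReal * (beta n α k)⁻¹ ≤ 1 := by
    intro i hi
    have hterm : ∀ k ∈ Finset.Icc 1 n,
        (μ ((Dpred p (beta n α) k ∩ (Dpred p (beta n α) (k+1))ᶜ)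
          ∩ {ω' | p i ω' ≤ beta n α k})).toReal * (beta n α k)⁻¹
        = ((μ (Dpred p (beta n α) k ∩ {ω | p i ω ≤ beta n α k})).toReal
            - (μ (Dpred p (beta n α) (k+1) ∩ {ω | p i ω ≤ beta n α k})).toReal)
            / beta n α k := by
      intro k _
      have hsetid : (Dpred p (beta n α) k ∩ (Dpred p (beta n α) (k+1))ᶜ)
            ∩ {ω' | p i ω' ≤ beta n α k}
          = (Dpred p (beta n α) k ∩ {ω | p i ω ≤ beta n α k})
            \ (Dpred p (beta n α) (k+1) ∩ {ω | p i ω ≤ beta n α k}) := by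
        ext ω
        simp only [Set.mem_inter_iff, Set.mem_diff, Set.mem_compl_iff, Set.mem_setOf_eq]
        tauto
      have hsub : Dpred p (beta n α) (k+1) ∩ {ω | p i ω ≤ beta n α k}
          ⊆ Dpred p (beta n α) k ∩ {ω | p i ω ≤ beta n α k} :=
        Set.inter_subset_inter_left _ (Dpred_antitone p _ (Nat.le_succ k))
      rw [hsetid, measure_diff hsub
        (((hDmeas (k+1)).inter (hsetm i _)).nullMeasurableSet) (measure_ne_top μ _),
        ENNReal.toReal_sub_of_le (measure_mono hsub) (measure_ne_top μ _), div_eq_mul_inv]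
    rw [Finset.sum_congr rfl hterm]
    apply telescope_bound n (beta n α)
      (fun k => (μ (Dpred p (beta n α) k ∩ {ω | p i ω ≤ beta n α k})).toReal)
      (fun k => (μ (Dpred p (beta n α) (k+1) ∩ {ω | p i ω ≤ beta n α k})).toReal)
      (fun k => (μ {ω | p i ω ≤ beta n α k}).toReal)
    · exact fun k h1 h2 => beta_pos hα h1 (by omega)
    · intro k h1 h2
      exact ENNReal.toReal_mono (measure_ne_top μ _) (measure_mono fun ω hω =>
        le_trans hω (beta_mono_s10 hα (Nat.le_succ k) (by omega)))
    · exact fun k => ENNReal.toReal_nonneg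
    · intro k h1 h2
      have hst := hstoch i hi (beta n α k)
        ⟨beta_nonneg_s10 hα (by omega), beta_le_one hα (by omega)⟩
      calc (μ {ω | p i ω ≤ beta n α k}).toReal
          ≤ (ENNReal.ofReal (beta n α k)).toReal :=
            ENNReal.toReal_mono ENNReal.ofReal_ne_top hst
        _ = beta n α k := ENNReal.toReal_ofReal (beta_nonneg_s10 hα (by omega))
    · exact fun k => ENNReal.toReal_nonneg
    · exact fun k => ENNReal.toReal_nonneg
    · intro k h1 h2
      exact ENNReal.toReal_mono (measure_ne_top μ _) (measure_mono Set.inter_subset_right)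
    · intro k h1 h2
      exact ENNReal.toReal_mono (measure_ne_top μ _) (measure_mono Set.inter_subset_right)
    · intro k h1 h2
      exact ENNReal.toReal_mono (measure_ne_top μ _)
        (measure_mono (Set.inter_subset_inter_left _ (Dpred_antitone p _ (Nat.le_succ k))))
    · intro k h1 h2
      have hkey := prds_key μ p hpm I0 i hi hprds
        {x : Fin n → ℝ | ∀ j ∈ Finset.Icc 1 (k+1),
          j ≤ (Finset.univ.filter fun i' => x i' ≤ beta n α j).card}
        (hDmeas (k+1))
        (by
          intro x y hxy hyC j hj
          refine le_trans (hyC j hj) (Finset.card_le_card ?_)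
          intro i' hi'
          simp only [Finset.mem_filter, Finset.mem_univ, true_and] at hi' ⊢
          exact le_trans (hxy i') hi')
        (beta_mono_s10 hα (Nat.le_succ k) (show k+1 ≤ n+1 by omega))
      exact hkey
    · show (μ (Dpred p (beta n α) (n+1) ∩ {ω | p i ω ≤ beta n α (n+1)})).toReal = 0
      rw [Dpred_top_empty, Set.empty_inter]
      simp
  calc ∑ i ∈ I0, ∑ k ∈ Finset.Icc 1 n,
      (μ ((Dpred p (beta n α) k ∩ (Dpred p (beta n α) (k+1))ᶜ)
        ∩ {ω' | p i ω' ≤ beta n α k})).toReal * (beta n α k)⁻¹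
      ≤ ∑ _i ∈ I0, (1:ℝ) := Finset.sum_le_sum hper
    _ = I0.card := by simp


end
end

section
/- Suppose the process t -> M_{I_0}(t) = sum_{i in I_0} (1(p_i <= t) - t)/(1-t), t in T = {0, beta_1, ..., beta_n}, is a martingale with respect to the enlarged filtration (F^f_t)_{t in T}, where F^f_t is generated by {1(p_i <= s) : s <= t, s in T, i in I_0} together with all p_j, j in I_1. Define beta_0 := 0 and the F^f_0-measurable random thresholds c(j) = (j - 1 - S(beta_j) - n_0*beta_j)/(1 - beta_j). Then for every i >= 2, E[ M_{I_0}(beta_{i-1}) * prod_{j=0}^{i-2} 1(M_{I_0}(beta_j) >= c(j)) ] >= 0. -/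
open MeasureTheory Finset
open scoped Classical

noncomputable section

variable {Ω : Type*}

/-- The enlarged filtration `F^f_t`. -/
def Ff {n : ℕ} [MeasurableSpace Ω] (p : Fin n → Ω → ℝ) (I0 : Finset (Fin n))
    (B : ℕ → ℝ) (k : ℕ) : MeasurableSpace Ω :=
  MeasurableSpace.generateFrom {A | ∃ i ∈ I0, ∃ j ≤ k, A = {ω | p i ω ≤ B j}} ⊔
    ⨆ i ∈ I0ᶜ, MeasurableSpace.comap (p i) inferInstance

/-- under martingale dependence w.r.t. the enlarged filtration `F^f`,
with thresholds `c(j) = (j-1-S(β_j)-n₀β_j)/(1-β_j)`, for every `i ≥ 2` one has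
`E[M(β_{i-1})·∏_{j=0}^{i-2} 1(M(β_j) ≥ c(j))] ≥ 0`.  (Note `β_0 = 0`.) -/
theorem mart_indicator_product_nonneg {n : ℕ} [MeasurableSpace Ω] (μ : Measure Ω)
    [IsProbabilityMeasure μ] (p : Fin n → Ω → ℝ) (I0 : Finset (Fin n)) (α : ℝ)
    (hn : 1 ≤ n) (hα : α ∈ Set.Ioo (0 : ℝ) 1) (hI0 : I0.Nonempty)
    (hp01 : ∀ i ω, p i ω ∈ Set.Icc (0 : ℝ) 1) (hpm : ∀ i, Measurable (p i))
    (hmart : ∀ j k : ℕ, j ≤ k → k ≤ n → ∀ A : Set Ω,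
      MeasurableSet[Ff p I0 (beta n α) j] A →
        ∫ ω in A, Mval p I0 (beta n α k) ω ∂μ = ∫ ω in A, Mval p I0 (beta n α j) ω ∂μ)
    (c : ℕ → Ω → ℝ)
    (hc : ∀ j ω, c j ω
      = ((j : ℝ) - 1 - (Vc p I0ᶜ (beta n α j) ω : ℝ) - (I0.card : ℝ) * beta n α j)
        / (1 - beta n α j)) :
    ∀ i : ℕ, 2 ≤ i → i ≤ n →
      0 ≤ ∫ ω, Mval p I0 (beta n α (i - 1)) ω
            * ∏ j ∈ Finset.range (i - 1),
                (if c j ω ≤ Mval p I0 (beta n α j) ω then (1 : ℝ) else 0) ∂μ := by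
  obtain ⟨hα0, hα1⟩ := hα
  -- basic facts about beta
  have hbeta : ∀ k : ℕ, k ≤ n → 0 ≤ beta n α k ∧ beta n α k < 1 := by
    intro k hk
    have hkn : (k : ℝ) ≤ n := Nat.cast_le.mpr hk
    have hk0 : (0:ℝ) ≤ k := Nat.cast_nonneg k
    have hden : (0:ℝ) < n + 1 - k * (1 - α) := by nlinarith
    constructor
    · exact div_nonneg (mul_nonneg hk0 hα0.le) hden.le
    · rw [beta, div_lt_one hden]; nlinarith
  -- filtration facts
  have hle1 : ∀ k : ℕ, MeasurableSpace.generateFrom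
      {A : Set Ω | ∃ i ∈ I0, ∃ j ≤ k, A = {ω | p i ω ≤ beta n α j}}
        ≤ Ff p I0 (beta n α) k := fun k => le_sup_left
  have hle2 : ∀ k : ℕ, ∀ i : Fin n, i ∈ I0ᶜ →
      MeasurableSpace.comap (p i) inferInstance ≤ Ff p I0 (beta n α) k :=
    fun k i hi => le_trans
      (le_biSup (fun i => MeasurableSpace.comap (p i) inferInstance) hi) le_sup_right
  have hFmono : ∀ j k : ℕ, j ≤ k → Ff p I0 (beta n α) j ≤ Ff p I0 (beta n α) k := by
    intro j k hjk
    refine sup_le_sup_right (MeasurableSpace.generateFrom_mono ?_) _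
    rintro A ⟨i, hi, l, hl, rfl⟩
    exact ⟨i, hi, l, hl.trans hjk, rfl⟩
  have hFle : ∀ k : ℕ, Ff p I0 (beta n α) k ≤ (inferInstance : MeasurableSpace Ω) := by
    intro k
    refine sup_le (MeasurableSpace.generateFrom_le ?_)
      (iSup_le fun i => iSup_le fun _ => (hpm i).comap_le)
    rintro A ⟨i, hi, l, hl, rfl⟩
    exact measurableSet_le (hpm i) measurable_const
  -- measurability of the basic indicator sets
  have hsetF : ∀ k : ℕ, ∀ i ∈ I0, ∀ j ≤ k,
      MeasurableSet[Ff p I0 (beta n α) k] {ω | p i ω ≤ beta n α j} :=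
    fun k i hi j hj =>
      hle1 k _ (MeasurableSpace.measurableSet_generateFrom ⟨i, hi, j, hj, rfl⟩)
  have hsetc : ∀ k : ℕ, ∀ t : ℝ, ∀ i : Fin n, i ∈ I0ᶜ →
      MeasurableSet[Ff p I0 (beta n α) k] {ω | p i ω ≤ t} := by
    intro k t i hi
    exact hle2 k i hi _ ⟨Set.Iic t, measurableSet_Iic, rfl⟩
  -- measurability of M w.r.t. the filtration
  have hMF : ∀ k j : ℕ, j ≤ k →
      Measurable[Ff p I0 (beta n α) k] (Mval p I0 (beta n α j)) := by
    intro k j hjk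
    apply Finset.measurable_sum
    intro i hi
    exact ((Measurable.ite (hsetF k i hi j hjk) measurable_const
      measurable_const).sub measurable_const).div_const _
  -- measurability of c w.r.t. the filtration (any level)
  have hVcsum : ∀ t : ℝ, ∀ ω : Ω,
      ((Vc p I0ᶜ t ω : ℝ)) = ∑ i ∈ I0ᶜ, (if p i ω ≤ t then (1:ℝ) else 0) := by
    intro t ω
    rw [Vc, Finset.card_filter]
    push_cast [apply_ite (Nat.cast : ℕ → ℝ)]
    rfl
  have hcF : ∀ k j : ℕ, Measurable[Ff p I0 (beta n α) k] (c j) := by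
    intro k j
    have hcfun : c j = fun ω => ((j : ℝ) - 1
        - (∑ i ∈ I0ᶜ, (if p i ω ≤ beta n α j then (1:ℝ) else 0))
        - (I0.card : ℝ) * beta n α j) / (1 - beta n α j) := by
      funext ω; rw [hc j ω, hVcsum]
    rw [hcfun]
    refine Measurable.div_const ?_ _
    refine Measurable.sub (Measurable.sub measurable_const ?_) measurable_const
    apply Finset.measurable_sum
    intro i hi
    exact Measurable.ite (hsetc k _ i hi) measurable_const measurable_const
  -- ambient measurability
  have hcmeas : ∀ j : ℕ, Measurable (c j) := fun j => (hcF 0 j).mono (hFle 0) le_rfl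
  have hMmeas : ∀ j : ℕ, Measurable (Mval p I0 (beta n α j)) :=
    fun j => (hMF j j le_rfl).mono (hFle j) le_rfl
  have hAmeas : ∀ m : ℕ,
      MeasurableSet {ω | ∀ j < m, c j ω ≤ Mval p I0 (beta n α j) ω} := by
    intro m
    have : {ω | ∀ j < m, c j ω ≤ Mval p I0 (beta n α j) ω}
        = ⋂ (j : ℕ) (_ : j < m), {ω | c j ω ≤ Mval p I0 (beta n α j) ω} := by
      ext ω; simp
    rw [this]
    exact MeasurableSet.iInter fun j => MeasurableSet.iInter fun _ =>
      measurableSet_le (hcmeas j) (hMmeas j)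
  have hAmF : ∀ k : ℕ,
      MeasurableSet[Ff p I0 (beta n α) k]
        {ω | ∀ j < k + 1, c j ω ≤ Mval p I0 (beta n α j) ω} := by
    intro k
    have : {ω | ∀ j < k + 1, c j ω ≤ Mval p I0 (beta n α j) ω}
        = ⋂ (j : ℕ) (_ : j < k + 1), {ω | c j ω ≤ Mval p I0 (beta n α j) ω} := by
      ext ω; simp
    rw [this]
    exact MeasurableSet.iInter fun j => MeasurableSet.iInter fun hj =>
      measurableSet_le (hcF k j) (hMF k j (Nat.lt_succ_iff.mp hj))
  -- integrability of M
  have hMint : ∀ k : ℕ, k ≤ n → Integrable (Mval p I0 (beta n α k)) μ := by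
    intro k hk
    obtain ⟨hb0, hb1⟩ := hbeta k hk
    have hpos : (0:ℝ) < 1 - beta n α k := by linarith
    refine (integrable_const ((I0.card : ℝ) * (1 / (1 - beta n α k)))).mono'
      (hMmeas k).aestronglyMeasurable ?_
    filter_upwards with ω
    rw [Mval, Real.norm_eq_abs]
    calc |∑ i ∈ I0, ((if p i ω ≤ beta n α k then (1:ℝ) else 0) - beta n α k)
            / (1 - beta n α k)|
        ≤ ∑ i ∈ I0, |((if p i ω ≤ beta n α k then (1:ℝ) else 0) - beta n α k)
            / (1 - beta n α k)| := Finset.abs_sum_le_sum_abs _ _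
      _ ≤ ∑ _i ∈ I0, 1 / (1 - beta n α k) := by
          refine Finset.sum_le_sum fun i _ => ?_
          rw [abs_div, abs_of_pos hpos]
          refine div_le_div_of_nonneg_right ?_ hpos.le
          split <;> rw [abs_le] <;> constructor <;> linarith
      _ = (I0.card : ℝ) * (1 / (1 - beta n α k)) := by
          rw [Finset.sum_const, nsmul_eq_mul]
  -- main claim by induction
  have claim : ∀ k : ℕ, k ≤ n → ∀ B : Set Ω, MeasurableSet[Ff p I0 (beta n α) 0] B →
      0 ≤ ∫ ω in ({ω | ∀ j < k, c j ω ≤ Mval p I0 (beta n α j) ω} ∩ B),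
            Mval p I0 (beta n α k) ω ∂μ := by
    intro k
    induction k with
    | zero =>
      intro _ B hB
      refine setIntegral_nonneg ((hAmeas 0).inter (hFle 0 B hB)) fun ω _ => ?_
      have hb0 : beta n α 0 = 0 := by simp [beta]
      rw [Mval, hb0]
      refine Finset.sum_nonneg fun i _ => ?_
      split <;> norm_num
    | succ k IH =>
      intro hk1 B hB
      have hABm : MeasurableSet[Ff p I0 (beta n α) k]
          ({ω | ∀ j < k + 1, c j ω ≤ Mval p I0 (beta n α j) ω} ∩ B) :=
        (hAmF k).inter (hFmono 0 k (Nat.zero_le k) B hB)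
      rw [hmart k (k+1) (Nat.le_succ k) hk1 _ hABm]
      have hB' : MeasurableSet[Ff p I0 (beta n α) 0]
          (B ∩ {ω | c k ω ≤ 0}) :=
        hB.inter (measurableSet_le (hcF 0 k) measurable_const)
      refine le_trans (IH (Nat.le_of_succ_le hk1) _ hB') ?_
      -- compare the two set integrals via indicators
      have hS1 : MeasurableSet ({ω | ∀ j < k, c j ω ≤ Mval p I0 (beta n α j) ω}
          ∩ (B ∩ {ω | c k ω ≤ 0})) :=
        (hAmeas k).inter (hFle 0 _ hB')
      have hS2 : MeasurableSet ({ω | ∀ j < k + 1, c j ω ≤ Mval p I0 (beta n α j) ω}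
          ∩ B) := (hAmeas (k+1)).inter (hFle 0 B hB)
      rw [← integral_indicator hS1, ← integral_indicator hS2]
      have hMk := hMint k (Nat.le_of_succ_le hk1)
      refine integral_mono (hMk.indicator hS1) (hMk.indicator hS2) ?_
      intro ω
      by_cases h2 : ω ∈ {ω | ∀ j < k + 1, c j ω ≤ Mval p I0 (beta n α j) ω} ∩ B
      · rw [Set.indicator_of_mem h2]
        by_cases h1 : ω ∈ {ω | ∀ j < k, c j ω ≤ Mval p I0 (beta n α j) ω}
            ∩ (B ∩ {ω | c k ω ≤ 0})
        · rw [Set.indicator_of_mem h1]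
        · rw [Set.indicator_of_notMem h1]
          obtain ⟨hA2, hBω⟩ := h2
          have hAk : ω ∈ {ω | ∀ j < k, c j ω ≤ Mval p I0 (beta n α j) ω} :=
            fun j hj => hA2 j (hj.trans (Nat.lt_succ_self k))
          have hck : ¬ (c k ω ≤ 0) := fun hc0 => h1 ⟨hAk, hBω, hc0⟩
          have hcM : c k ω ≤ Mval p I0 (beta n α k) ω := hA2 k (Nat.lt_succ_self k)
          have := not_le.mp hck
          linarith
      · rw [Set.indicator_of_notMem h2]
        by_cases h1 : ω ∈ {ω | ∀ j < k, c j ω ≤ Mval p I0 (beta n α j) ω}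
            ∩ (B ∩ {ω | c k ω ≤ 0})
        · rw [Set.indicator_of_mem h1]
          obtain ⟨hAk, hBω, hc0⟩ := h1
          have hc0' : c k ω ≤ 0 := hc0
          have hnot : ¬ (c k ω ≤ Mval p I0 (beta n α k) ω) := by
            intro hle
            refine h2 ⟨?_, hBω⟩
            intro j hj
            rcases Nat.lt_succ_iff_lt_or_eq.mp hj with h | h
            · exact hAk j h
            · rw [h]; exact hle
          have := not_le.mp hnot
          linarith
        · rw [Set.indicator_of_notMem h1]
  -- conclude
  intro i hi2 hin
  have him : i - 1 ≤ n := le_trans (Nat.sub_le i 1) hin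
  have key := claim (i-1) him Set.univ MeasurableSet.univ
  rw [Set.inter_univ] at key
  have heq : ∀ ω : Ω, Mval p I0 (beta n α (i - 1)) ω
      * ∏ j ∈ Finset.range (i - 1),
          (if c j ω ≤ Mval p I0 (beta n α j) ω then (1 : ℝ) else 0)
      = Set.indicator {ω | ∀ j < i - 1, c j ω ≤ Mval p I0 (beta n α j) ω}
          (Mval p I0 (beta n α (i - 1))) ω := by
    intro ω
    rw [Finset.prod_boole]
    by_cases h : ∀ j < i - 1, c j ω ≤ Mval p I0 (beta n α j) ω
    · have hmem : ω ∈ {ω | ∀ j < i - 1, c j ω ≤ Mval p I0 (beta n α j) ω} := h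
      rw [if_pos fun j hj => h j (Finset.mem_range.mp hj),
        Set.indicator_of_mem hmem, mul_one]
    · have hmem : ω ∉ {ω | ∀ j < i - 1, c j ω ≤ Mval p I0 (beta n α j) ω} := h
      rw [if_neg fun hall => h fun j hj => hall j (Finset.mem_range.mpr hj),
        Set.indicator_of_notMem hmem, mul_zero]
  have hrw : ∫ ω, Mval p I0 (beta n α (i - 1)) ω
      * ∏ j ∈ Finset.range (i - 1),
          (if c j ω ≤ Mval p I0 (beta n α j) ω then (1 : ℝ) else 0) ∂μ
      = ∫ ω in {ω | ∀ j < i - 1, c j ω ≤ Mval p I0 (beta n α j) ω},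
          Mval p I0 (beta n α (i - 1)) ω ∂μ := by
    rw [← integral_indicator (hAmeas (i - 1))]
    exact integral_congr_ae (Filter.Eventually.of_forall heq)
  rw [hrw]
  exact key


end
end
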